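/- arXiv:0906.2318 — 3 statements merged into one kernel-verified Lean document; each statement's English description precedes it below -/
import Mathlib

section
/- (Dalang–Morton–Willinger) Let (S_n)_{n=0,1,…,N} be a real-valued process adapted to a discrete filtration (F_n)_{n=0,1,…,N}, and let K = { Σ_{n=1}^{N} f_{n−1}(S_n − S_{n−1}) : each f_{n−1} : Ω → ℝ is F_{n−1}-measurable }. If K ∩ L⁰_+ = {0}, i.e., every element ξ of K with ξ ≥ 0 a.s. satisfies ξ = 0 a.s., then there exists a probability measure Q on (Ω, F), mutually absolutely continuous with P, such that each S_n is Q-integrable and E_Q[S_{n+1} | F_n] = S_n a.s. for all 0 ≤ n < N, i.e., S is a Q-martingale. -/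
open MeasureTheory ProbabilityTheory Filter Set
open scoped NNReal ENNReal

variable {Ω : Type*} {m0 : MeasurableSpace Ω}

/-- A simple predictable integrand with bounded support for the filtration `ℱ`:
`H = g₀ 1_{{0}} + ∑_{j=1}^{n-1} g_j 1_{(τ_j, τ_{j+1}]}` with `n ≥ 2`,
`0 ≤ τ₁ ≤ ⋯ ≤ τ_n` stopping times, `τ_n` bounded, and `g_j` being `F_{τ_j}`-measurable. -/
structure SimpleStrategy (ℱ : MeasureTheory.Filtration ℝ≥0 m0) where
  n : ℕ
  two_le : 2 ≤ n
  g0 : ℝ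
  τ : ℕ → Ω → ℝ≥0
  g : ℕ → Ω → ℝ
  stopping : ∀ j, 1 ≤ j → j ≤ n → MeasureTheory.IsStoppingTime ℱ (fun ω => ((τ j ω : ℝ≥0) : WithTop ℝ≥0))
  mono : ∀ j, 1 ≤ j → j < n → ∀ ω, τ j ω ≤ τ (j + 1) ω
  bounded : ∃ T : ℝ≥0, ∀ ω, τ n ω ≤ T
  g_meas : ∀ j (h1 : 1 ≤ j) (h2 : j < n),
    Measurable[(stopping j h1 h2.le).measurableSpace] (g j)

/-- terminal gain `(H ⬝ X)_∞ = ∑_{j=1}^{n-1} g_j (X_{τ_{j+1}} - X_{τ_j})`. -/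
def SimpleStrategy.gains {ℱ : MeasureTheory.Filtration ℝ≥0 m0}
    (H : SimpleStrategy ℱ) (X : ℝ≥0 → Ω → ℝ) (ω : Ω) : ℝ :=
  ∑ j ∈ Finset.Ico 1 H.n, H.g j ω * (X (H.τ (j + 1) ω) ω - X (H.τ j ω) ω)

/-- membership in `Sʰ(𝔽)` : the jump times are at least `h` apart. -/
def SimpleStrategy.Spaced {ℱ : MeasureTheory.Filtration ℝ≥0 m0}
    (H : SimpleStrategy ℱ) (h : ℝ≥0) : Prop :=
  ∀ j, 1 ≤ j → j < H.n → ∀ ω, H.τ j ω + h ≤ H.τ (j + 1) ω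

/-- `H` is an arbitrage for `X` under `μ`. -/
def IsArbitrage {ℱ : MeasureTheory.Filtration ℝ≥0 m0} (μ : MeasureTheory.Measure Ω)
    (X : ℝ≥0 → Ω → ℝ) (H : SimpleStrategy ℱ) : Prop :=
  (∀ᵐ ω ∂μ, 0 ≤ H.gains X ω) ∧ 0 < μ {ω | 0 < H.gains X ω}

/-- no arbitrage in the class `S(𝔽)` of simple predictable integrands of bounded support. -/
def NoArbitrageSimple (μ : MeasureTheory.Measure Ω) (ℱ : MeasureTheory.Filtration ℝ≥0 m0)
    (X : ℝ≥0 → Ω → ℝ) : Prop :=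
  ¬ ∃ H : SimpleStrategy ℱ, IsArbitrage μ X H

/-- no arbitrage in the Cheridito class `Π(𝔽) = ⋃_{h>0} Sʰ(𝔽)`. -/
def NoArbitrageCC (μ : MeasureTheory.Measure Ω) (ℱ : MeasureTheory.Filtration ℝ≥0 m0)
    (X : ℝ≥0 → Ω → ℝ) : Prop :=
  ¬ ∃ (h : ℝ≥0) (H : SimpleStrategy ℱ), 0 < h ∧ H.Spaced h ∧ IsArbitrage μ X H

/-- `η ∈ L⁰_{+-}` : `η` is neither a nonnegative r.v. that is positive with positive
probability, nor a nonpositive r.v. that is negative with positive probability. -/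
def MemLzeroPM (μ : MeasureTheory.Measure Ω) (η : Ω → ℝ) : Prop :=
  ¬ ((∀ᵐ ω ∂μ, 0 ≤ η ω) ∧ 0 < μ {ω | 0 < η ω}) ∧
  ¬ ((∀ᵐ ω ∂μ, η ω ≤ 0) ∧ 0 < μ {ω | η ω < 0})

/-- all paths are right continuous with left limits. -/
def IsCadlag (X : ℝ≥0 → Ω → ℝ) : Prop :=
  ∀ ω, (∀ t : ℝ≥0, ContinuousWithinAt (fun s => X s ω) (Set.Ici t) t) ∧
    (∀ t : ℝ≥0, 0 < t →
      ∃ l : ℝ, Filter.Tendsto (fun s => X s ω) (nhdsWithin t (Set.Iio t)) (nhds l))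

/-- a standard Brownian motion w.r.t. the filtration `ℱ`. -/
def IsStandardBM (μ : MeasureTheory.Measure Ω) (ℱ : MeasureTheory.Filtration ℝ≥0 m0)
    (B : ℝ≥0 → Ω → ℝ) : Prop :=
  MeasureTheory.Adapted ℱ B ∧ (∀ ω, B 0 ω = 0) ∧ (∀ ω, Continuous fun t => B t ω) ∧
  ∀ s t : ℝ≥0, s < t →
    ProbabilityTheory.Indep
      (MeasurableSpace.comap (fun ω => B t ω - B s ω) (inferInstance : MeasurableSpace ℝ))
      (ℱ s) μ ∧
    MeasureTheory.Measure.map (fun ω => B t ω - B s ω) μ =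
      ProbabilityTheory.gaussianReal 0 (t - s)

private lemma xexp_le (x : ℝ) : x * Real.exp (-x) ≤ 1 := by
  rcases le_or_gt x 0 with hx | hx
  · have : Real.exp (-x) ≤ Real.exp (-x) := le_rfl
    nlinarith [Real.exp_pos (-x), mul_nonpos_of_nonpos_of_nonneg hx (Real.exp_pos (-x)).le]
  · have h1 : x ≤ Real.exp x := (by linarith : x ≤ x + 1).trans (Real.add_one_le_exp x)
    have h2 := mul_le_mul_of_nonneg_right h1 (Real.exp_nonneg (-x))
    rwa [← Real.exp_add, add_neg_cancel, Real.exp_zero] at h2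

private lemma integrable_of_bound {μ : Measure Ω} [IsFiniteMeasure μ] {f : Ω → ℝ}
    (hf : AEStronglyMeasurable f μ) (C : ℝ) (h : ∀ᵐ ω ∂μ, |f ω| ≤ C) : Integrable f μ :=
  Integrable.mono' (integrable_const C) hf (by simpa [Real.norm_eq_abs] using h)

private lemma ae_zero_of_condexp_nonpos {α : Type*} {m m0 : MeasurableSpace α}
    {μ : Measure α} [IsFiniteMeasure μ] (hm : m ≤ m0) {g : α → ℝ}
    (hgi : Integrable g μ) (hg0 : ∀ᵐ ω ∂μ, 0 ≤ g ω) :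
    ∀ᵐ ω ∂μ, (μ[g|m]) ω ≤ 0 → g ω = 0 := by
  set s : Set α := {ω | (μ[g|m]) ω ≤ 0} with hs_def
  have hs : MeasurableSet[m] s :=
    (stronglyMeasurable_condExp (m := m) (f := g) (μ := μ)).measurable measurableSet_Iic
  have hs0 : MeasurableSet s := hm _ hs
  have h1 : ∫ ω in s, g ω ∂μ ≤ 0 := by
    rw [← setIntegral_condExp hm hgi hs]
    exact setIntegral_nonpos hs0 fun ω hω => hω
  have h2 : (0:ℝ) ≤ ∫ ω in s, g ω ∂μ := setIntegral_nonneg_of_ae hg0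
  have h3 : ∫ ω in s, g ω ∂μ = 0 := le_antisymm h1 h2
  have h4 : g =ᵐ[μ.restrict s] 0 :=
    (integral_eq_zero_iff_of_nonneg_ae (ae_restrict_of_ae hg0) hgi.integrableOn).mp h3
  exact (ae_restrict_iff' hs0).mp h4

private lemma condexp_pos_of_pos {α : Type*} {m m0 : MeasurableSpace α}
    {μ : Measure α} [IsFiniteMeasure μ] (hm : m ≤ m0) {g : α → ℝ}
    (hgi : Integrable g μ) (hg0 : ∀ᵐ ω ∂μ, 0 < g ω) :
    ∀ᵐ ω ∂μ, 0 < (μ[g|m]) ω := by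
  filter_upwards [ae_zero_of_condexp_nonpos hm hgi (hg0.mono fun ω h => h.le), hg0] with ω h1 h2
  by_contra h
  push_neg at h
  exact absurd (h1 h) (ne_of_gt h2)

private lemma onestep {α : Type*} {m m' m0 : MeasurableSpace α}
    (hm : m ≤ m') (hm' : m' ≤ m0) (μ : Measure α) [IsProbabilityMeasure μ]
    {S0 S1 : α → ℝ} (hS0 : Measurable[m] S0) (hS1 : Measurable[m'] S1)
    (hNA : ∀ f : α → ℝ, Measurable[m] f →
      (∀ᵐ ω ∂μ, 0 ≤ f ω * (S1 ω - S0 ω)) → ∀ᵐ ω ∂μ, f ω * (S1 ω - S0 ω) = 0) :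
    ∃ Z : α → ℝ, Measurable[m'] Z ∧ (∀ ω, 0 ≤ Z ω) ∧ (∀ᵐ ω ∂μ, 0 < Z ω) ∧
      (∃ C : ℝ, ∀ ω, Z ω ≤ C) ∧ (∫ ω, Z ω ∂μ) = 1 ∧
      (∃ C : ℝ, ∀ᵐ ω ∂μ, |Z ω * S0 ω| ≤ C) ∧
      (∃ C : ℝ, ∀ ω, |Z ω * (S1 ω - S0 ω)| ≤ C) ∧
      (∀ s : Set α, MeasurableSet[m] s → ∫ ω in s, Z ω * (S1 ω - S0 ω) ∂μ = 0) := by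
  have hm0 : m ≤ m0 := hm.trans hm'
  set X : α → ℝ := fun ω => S1 ω - S0 ω with hX_def
  have hX : Measurable[m'] X := hS1.sub (hS0.mono hm le_rfl)
  set w : α → ℝ := fun ω => Real.exp (-|X ω|) with hw_def
  have hw_meas : Measurable[m'] w := Real.measurable_exp.comp (measurable_neg.comp (measurable_abs.comp hX))
  have hw_pos : ∀ ω, 0 < w ω := fun ω => Real.exp_pos _
  have hw_le : ∀ ω, w ω ≤ 1 := fun ω =>
    Real.exp_le_one_iff.mpr (neg_nonpos.mpr (abs_nonneg _))
  set p : α → ℝ := fun ω => max (X ω) 0 * w ω with hp_def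
  set q : α → ℝ := fun ω => max (-X ω) 0 * w ω with hq_def
  have hp_meas : Measurable[m'] p := (hX.max measurable_const).mul hw_meas
  have hq_meas : Measurable[m'] q := (hX.neg.max measurable_const).mul hw_meas
  have hp_nonneg : ∀ ω, 0 ≤ p ω := fun ω => mul_nonneg (le_max_right _ _) (hw_pos ω).le
  have hq_nonneg : ∀ ω, 0 ≤ q ω := fun ω => mul_nonneg (le_max_right _ _) (hw_pos ω).le
  have key_le : ∀ y : ℝ, max y 0 * Real.exp (-|y|) ≤ 1 := by
    intro y
    calc max y 0 * Real.exp (-|y|) ≤ max y 0 * Real.exp (-(max y 0)) := by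
          apply mul_le_mul_of_nonneg_left _ (le_max_right _ _)
          exact Real.exp_le_exp.mpr (neg_le_neg (max_le (le_abs_self y) (abs_nonneg y)))
      _ ≤ 1 := xexp_le _
  have hp_le : ∀ ω, p ω ≤ 1 := fun ω => key_le (X ω)
  have hq_le : ∀ ω, q ω ≤ 1 := by
    intro ω
    have := key_le (-X ω)
    rwa [abs_neg] at this
  have hp_int : Integrable p μ := integrable_of_bound
    (hp_meas.mono hm' le_rfl).aestronglyMeasurable 1
    (Eventually.of_forall fun ω => abs_le.mpr ⟨by linarith [hp_nonneg ω], hp_le ω⟩)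
  have hq_int : Integrable q μ := integrable_of_bound
    (hq_meas.mono hm' le_rfl).aestronglyMeasurable 1
    (Eventually.of_forall fun ω => abs_le.mpr ⟨by linarith [hq_nonneg ω], hq_le ω⟩)
  set A : α → ℝ := μ[p|m] with hA_def
  set B : α → ℝ := μ[q|m] with hB_def
  have hA_meas : StronglyMeasurable[m] A := stronglyMeasurable_condExp
  have hB_meas : StronglyMeasurable[m] B := stronglyMeasurable_condExp
  have hA0 : ∀ᵐ ω ∂μ, 0 ≤ A ω := condExp_nonneg (Eventually.of_forall hp_nonneg)
  have hB0 : ∀ᵐ ω ∂μ, 0 ≤ B ω := condExp_nonneg (Eventually.of_forall hq_nonneg)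
  -- a measurable-set version of no-arbitrage
  have core : ∀ (c : ℝ), c ≠ 0 → ∀ (s : Set α), MeasurableSet[m] s →
      (∀ᵐ ω ∂μ, ω ∈ s → 0 ≤ c * X ω) → ∀ᵐ ω ∂μ, ω ∈ s → X ω = 0 := by
    intro c hc s hs hpos
    have hf_meas : Measurable[m] (s.indicator fun _ => c) :=
      (measurable_const : Measurable[m] fun _ : α => c).indicator hs
    have h1 : ∀ᵐ ω ∂μ, 0 ≤ s.indicator (fun _ => c) ω * X ω := by
      filter_upwards [hpos] with ω hω
      by_cases hmem : ω ∈ s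
      · rw [Set.indicator_of_mem hmem]; exact hω hmem
      · rw [Set.indicator_of_notMem hmem, zero_mul]
    have h2 := hNA _ hf_meas h1
    filter_upwards [h2] with ω hω hmem
    rw [Set.indicator_of_mem hmem] at hω
    exact (mul_eq_zero.mp hω).resolve_left hc
  -- conditional expectation vanishes on sets where integrand vanishes
  have vanish : ∀ (g : α → ℝ), Integrable g μ → (∀ ω, 0 ≤ g ω) →
      ∀ (s : Set α), MeasurableSet[m] s → (∀ᵐ ω ∂μ, ω ∈ s → g ω = 0) →
      ∀ᵐ ω ∂μ, ω ∈ s → (μ[g|m]) ω = 0 := by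
    intro g hgi hg0 s hs hzero
    have hs0 : MeasurableSet s := hm0 _ hs
    have hg_eq : g =ᵐ[μ.restrict s] 0 := (ae_restrict_iff' hs0).mpr hzero
    have h0 : ∫ ω in s, g ω ∂μ = 0 := by
      rw [integral_congr_ae hg_eq]; simp
    have h1 : ∫ ω in s, (μ[g|m]) ω ∂μ = 0 := by
      rw [setIntegral_condExp hm0 hgi hs, h0]
    have hc0 : ∀ᵐ ω ∂μ, 0 ≤ (μ[g|m]) ω := condExp_nonneg (Eventually.of_forall hg0)
    have h2 : (μ[g|m]) =ᵐ[μ.restrict s] 0 :=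
      (integral_eq_zero_iff_of_nonneg_ae (ae_restrict_of_ae hc0)
        integrable_condExp.integrableOn).mp h1
    exact (ae_restrict_iff' hs0).mp h2
  have hBA : ∀ᵐ ω ∂μ, B ω ≤ 0 → A ω = 0 := by
    set s : Set α := {ω | B ω ≤ 0} with hs_def
    have hs : MeasurableSet[m] s := hB_meas.measurable measurableSet_Iic
    have step1 : ∀ᵐ ω ∂μ, ω ∈ s → q ω = 0 :=
      ae_zero_of_condexp_nonpos hm0 hq_int (Eventually.of_forall hq_nonneg)
    have step2 : ∀ᵐ ω ∂μ, ω ∈ s → 0 ≤ 1 * X ω := by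
      filter_upwards [step1] with ω hω hmem
      have hq0 := hω hmem
      have : max (-X ω) 0 = 0 := by
        rcases mul_eq_zero.mp hq0 with h | h
        · exact h
        · exact absurd h (ne_of_gt (hw_pos ω))
      have : -X ω ≤ 0 := by
        calc -X ω ≤ max (-X ω) 0 := le_max_left _ _
          _ = 0 := this
      linarith
    have step3 : ∀ᵐ ω ∂μ, ω ∈ s → X ω = 0 := core 1 one_ne_zero s hs step2
    have step4 : ∀ᵐ ω ∂μ, ω ∈ s → p ω = 0 := by
      filter_upwards [step3] with ω hω hmem
      simp only [hp_def]
      simp [hω hmem]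
    exact vanish p hp_int hp_nonneg s hs step4
  have hAB : ∀ᵐ ω ∂μ, A ω ≤ 0 → B ω = 0 := by
    set s : Set α := {ω | A ω ≤ 0} with hs_def
    have hs : MeasurableSet[m] s := hA_meas.measurable measurableSet_Iic
    have step1 : ∀ᵐ ω ∂μ, ω ∈ s → p ω = 0 :=
      ae_zero_of_condexp_nonpos hm0 hp_int (Eventually.of_forall hp_nonneg)
    have step2 : ∀ᵐ ω ∂μ, ω ∈ s → 0 ≤ (-1) * X ω := by
      filter_upwards [step1] with ω hω hmem
      have hq0 := hω hmem
      have : max (X ω) 0 = 0 := by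
        rcases mul_eq_zero.mp hq0 with h | h
        · exact h
        · exact absurd h (ne_of_gt (hw_pos ω))
      have : X ω ≤ 0 := by
        calc X ω ≤ max (X ω) 0 := le_max_left _ _
          _ = 0 := this
      linarith
    have step3 : ∀ᵐ ω ∂μ, ω ∈ s → X ω = 0 := core (-1) (by norm_num) s hs step2
    have step4 : ∀ᵐ ω ∂μ, ω ∈ s → q ω = 0 := by
      filter_upwards [step3] with ω hω hmem
      simp only [hq_def]
      simp [hω hmem]
    exact vanish q hq_int hq_nonneg s hs step4
  have msetm : ∀ {g : α → ℝ}, StronglyMeasurable[m] g → MeasurableSet[m] {ω | 0 < g ω} :=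
    fun hg => measurableSet_lt measurable_const hg.measurable
  -- the tilting coefficients
  set u : α → ℝ := fun ω => if 0 < A ω then max 0 (min (A ω) (B ω)) / A ω else 1 with hu_def
  set v : α → ℝ := fun ω => if 0 < B ω then max 0 (min (A ω) (B ω)) / B ω else 1 with hv_def
  have hu_meas : Measurable[m] u := by
    refine Measurable.ite (msetm hA_meas) ?_
      measurable_const
    exact (measurable_const.max (hA_meas.measurable.min hB_meas.measurable)).div
      hA_meas.measurable
  have hv_meas : Measurable[m] v := by
    refine Measurable.ite (msetm hB_meas) ?_
      measurable_const
    exact (measurable_const.max (hA_meas.measurable.min hB_meas.measurable)).div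
      hB_meas.measurable
  have hu_nonneg : ∀ ω, 0 ≤ u ω := by
    intro ω
    simp only [hu_def]
    by_cases h : 0 < A ω
    · rw [if_pos h]; exact div_nonneg (le_max_left _ _) h.le
    · rw [if_neg h]; norm_num
  have hv_nonneg : ∀ ω, 0 ≤ v ω := by
    intro ω
    simp only [hv_def]
    by_cases h : 0 < B ω
    · rw [if_pos h]; exact div_nonneg (le_max_left _ _) h.le
    · rw [if_neg h]; norm_num
  have hu_le : ∀ ω, u ω ≤ 1 := by
    intro ω
    simp only [hu_def]
    by_cases h : 0 < A ω
    · rw [if_pos h]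
      exact div_le_one_of_le₀ (max_le h.le (min_le_left _ _)) h.le
    · rw [if_neg h]
  have hv_le : ∀ ω, v ω ≤ 1 := by
    intro ω
    simp only [hv_def]
    by_cases h : 0 < B ω
    · rw [if_pos h]
      exact div_le_one_of_le₀ (max_le h.le (min_le_right _ _)) h.le
    · rw [if_neg h]
  have hABpos : ∀ᵐ ω ∂μ, (0 < A ω ↔ 0 < B ω) := by
    filter_upwards [hA0, hB0, hBA, hAB] with ω h1 h2 h3 h4
    constructor
    · intro h
      rcases lt_or_eq_of_le h2 with h' | h'
      · exact h'
      · exact absurd (h3 h'.ge) (ne_of_gt h)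
    · intro h
      rcases lt_or_eq_of_le h1 with h' | h'
      · exact h'
      · exact absurd (h4 h'.ge) (ne_of_gt h)
  have hu_pos : ∀ᵐ ω ∂μ, 0 < u ω := by
    filter_upwards [hABpos] with ω hiff
    simp only [hu_def]
    by_cases h : 0 < A ω
    · rw [if_pos h]
      have hB := hiff.mp h
      have : 0 < min (A ω) (B ω) := lt_min h hB
      exact div_pos (lt_of_lt_of_le this (le_max_right _ _)) h
    · rw [if_neg h]; norm_num
  have hv_pos : ∀ᵐ ω ∂μ, 0 < v ω := by
    filter_upwards [hABpos] with ω hiff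
    simp only [hv_def]
    by_cases h : 0 < B ω
    · rw [if_pos h]
      have hA := hiff.mpr h
      have : 0 < min (A ω) (B ω) := lt_min hA h
      exact div_pos (lt_of_lt_of_le this (le_max_right _ _)) h
    · rw [if_neg h]; norm_num
  have huAvB : ∀ᵐ ω ∂μ, u ω * A ω - v ω * B ω = 0 := by
    filter_upwards [hA0, hB0, hABpos] with ω h1 h2 hiff
    simp only [hu_def, hv_def]
    by_cases h : 0 < A ω
    · have hB := hiff.mp h
      rw [if_pos h, if_pos hB, div_mul_cancel₀ _ (ne_of_gt h),
        div_mul_cancel₀ _ (ne_of_gt hB), sub_self]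
    · have hA : A ω = 0 := le_antisymm (not_lt.mp h) h1
      have hB : ¬ 0 < B ω := fun hb => h (hiff.mpr hb)
      have hB0' : B ω = 0 := le_antisymm (not_lt.mp hB) h2
      rw [hA, hB0']; ring
  set z : α → ℝ := fun ω => w ω * (if 0 < X ω then u ω else if X ω < 0 then v ω else 1)
    with hz_def
  have hz_meas : Measurable[m'] z := by
    refine hw_meas.mul ?_
    refine Measurable.ite (measurableSet_lt measurable_const hX) (hu_meas.mono hm le_rfl) ?_
    exact Measurable.ite (measurableSet_lt hX measurable_const) (hv_meas.mono hm le_rfl)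
      measurable_const
  have hz_nonneg : ∀ ω, 0 ≤ z ω := by
    intro ω
    simp only [hz_def]
    refine mul_nonneg (hw_pos ω).le ?_
    split_ifs with h1 h2
    · exact hu_nonneg ω
    · exact hv_nonneg ω
    · norm_num
  have hz_le : ∀ ω, z ω ≤ 1 := by
    intro ω
    simp only [hz_def]
    have hinner : (if 0 < X ω then u ω else if X ω < 0 then v ω else 1) ≤ 1 := by
      split_ifs with h1 h2
      · exact hu_le ω
      · exact hv_le ω
      · exact le_rfl
    have hinner0 : 0 ≤ (if 0 < X ω then u ω else if X ω < 0 then v ω else 1) := by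
      split_ifs with h1 h2
      · exact hu_nonneg ω
      · exact hv_nonneg ω
      · norm_num
    calc w ω * _ ≤ 1 * 1 := mul_le_mul (hw_le ω) hinner hinner0 zero_le_one
      _ = 1 := one_mul 1
  have hz_pos : ∀ᵐ ω ∂μ, 0 < z ω := by
    filter_upwards [hu_pos, hv_pos] with ω h1 h2
    simp only [hz_def]
    refine mul_pos (hw_pos ω) ?_
    split_ifs with ha hb
    · exact h1
    · exact h2
    · norm_num
  have hz_int : Integrable z μ := integrable_of_bound
    (hz_meas.mono hm' le_rfl).aestronglyMeasurable 1
    (Eventually.of_forall fun ω => abs_le.mpr ⟨by linarith [hz_nonneg ω], hz_le ω⟩)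
  have hzX_bound : ∀ ω, |z ω * X ω| ≤ 1 := by
    intro ω
    rw [abs_mul, abs_of_nonneg (hz_nonneg ω)]
    have h1 : z ω ≤ w ω := by
      simp only [hz_def]
      have hinner : (if 0 < X ω then u ω else if X ω < 0 then v ω else 1) ≤ 1 := by
        split_ifs with ha hb
        · exact hu_le ω
        · exact hv_le ω
        · exact le_rfl
      calc w ω * _ ≤ w ω * 1 := mul_le_mul_of_nonneg_left hinner (hw_pos ω).le
        _ = w ω := mul_one _
    calc z ω * |X ω| ≤ w ω * |X ω| := mul_le_mul_of_nonneg_right h1 (abs_nonneg _)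
      _ = |X ω| * Real.exp (-|X ω|) := mul_comm _ _
      _ ≤ 1 := xexp_le _
  have hzX_int : Integrable (fun ω => z ω * X ω) μ := integrable_of_bound
    ((hz_meas.mul hX).mono hm' le_rfl).aestronglyMeasurable 1
    (Eventually.of_forall hzX_bound)
  -- conditional expectation of z * X given m is zero
  have hzX_eq : (fun ω => z ω * X ω) = u * p - v * q := by
    funext ω
    simp only [Pi.sub_apply, Pi.mul_apply]
    simp only [hz_def, hp_def, hq_def]
    rcases lt_trichotomy (X ω) 0 with h | h | h
    · rw [if_neg (by linarith), if_pos h, max_eq_right h.le, max_eq_left (by linarith)]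
      ring
    · rw [h]
      simp
    · rw [if_pos h, max_eq_left h.le, max_eq_right (by linarith)]
      ring
  have hup_int : Integrable (u * p) μ := integrable_of_bound
    ((hu_meas.mono hm0 le_rfl).mul (hp_meas.mono hm' le_rfl)).aestronglyMeasurable 1
    (Eventually.of_forall fun ω => by
      rw [Pi.mul_apply, abs_mul, abs_of_nonneg (hu_nonneg ω), abs_of_nonneg (hp_nonneg ω)]
      calc u ω * p ω ≤ 1 * 1 := mul_le_mul (hu_le ω) (hp_le ω) (hp_nonneg ω) zero_le_one
        _ = 1 := one_mul 1)
  have hvq_int : Integrable (v * q) μ := integrable_of_bound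
    ((hv_meas.mono hm0 le_rfl).mul (hq_meas.mono hm' le_rfl)).aestronglyMeasurable 1
    (Eventually.of_forall fun ω => by
      rw [Pi.mul_apply, abs_mul, abs_of_nonneg (hv_nonneg ω), abs_of_nonneg (hq_nonneg ω)]
      calc v ω * q ω ≤ 1 * 1 := mul_le_mul (hv_le ω) (hq_le ω) (hq_nonneg ω) zero_le_one
        _ = 1 := one_mul 1)
  have c_up : μ[u * p|m] =ᵐ[μ] u * A :=
    condExp_mul_of_stronglyMeasurable_left hu_meas.stronglyMeasurable hup_int hp_int
  have c_vq : μ[v * q|m] =ᵐ[μ] v * B :=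
    condExp_mul_of_stronglyMeasurable_left hv_meas.stronglyMeasurable hvq_int hq_int
  have cond1 : μ[fun ω => z ω * X ω|m] =ᵐ[μ] 0 := by
    rw [hzX_eq]
    calc μ[u * p - v * q|m] =ᵐ[μ] μ[u * p|m] - μ[v * q|m] := condExp_sub hup_int hvq_int m
      _ =ᵐ[μ] u * A - v * B := c_up.sub c_vq
      _ =ᵐ[μ] 0 := by
          filter_upwards [huAvB] with ω hω
          simpa using hω
  -- the normalizing m-measurable factor
  set d : α → ℝ := μ[z|m] with hd_def
  have hd_pos : ∀ᵐ ω ∂μ, 0 < d ω := condexp_pos_of_pos hm0 hz_int hz_pos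
  set r : α → ℝ := fun ω => if 0 < d ω then Real.exp (-|S0 ω|) * min (d ω) 1 / d ω else 1
    with hr_def
  have hd_meas : StronglyMeasurable[m] d := stronglyMeasurable_condExp
  have hr_meas : Measurable[m] r := by
    refine Measurable.ite (msetm hd_meas) ?_
      measurable_const
    exact ((Real.measurable_exp.comp (measurable_neg.comp (measurable_abs.comp hS0))).mul
      (hd_meas.measurable.min (measurable_const : Measurable[m] fun _ : α => (1:ℝ)))).div
      hd_meas.measurable
  have hr_pos : ∀ ω, 0 < r ω := by
    intro ω
    simp only [hr_def]
    by_cases h : 0 < d ω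
    · rw [if_pos h]
      exact div_pos (mul_pos (Real.exp_pos _) (lt_min h one_pos)) h
    · rw [if_neg h]; norm_num
  have hr_le : ∀ ω, r ω ≤ 1 := by
    intro ω
    simp only [hr_def]
    by_cases h : 0 < d ω
    · rw [if_pos h]
      rw [div_le_one h]
      calc Real.exp (-|S0 ω|) * min (d ω) 1 ≤ 1 * min (d ω) 1 :=
            mul_le_mul_of_nonneg_right
              (Real.exp_le_one_iff.mpr (neg_nonpos.mpr (abs_nonneg _)))
              (le_min h.le zero_le_one)
        _ = min (d ω) 1 := one_mul _
        _ ≤ d ω := min_le_left _ _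
    · rw [if_neg h]
  set Y : α → ℝ := fun ω => r ω * z ω with hY_def
  have hY_meas : Measurable[m'] Y := (hr_meas.mono hm le_rfl).mul hz_meas
  have hY_nonneg : ∀ ω, 0 ≤ Y ω := fun ω => mul_nonneg (hr_pos ω).le (hz_nonneg ω)
  have hY_le : ∀ ω, Y ω ≤ 1 := by
    intro ω
    simp only [hY_def]
    calc r ω * z ω ≤ 1 * 1 := mul_le_mul (hr_le ω) (hz_le ω) (hz_nonneg ω) zero_le_one
      _ = 1 := one_mul 1
  have hY_int : Integrable Y μ := integrable_of_bound
    (hY_meas.mono hm' le_rfl).aestronglyMeasurable 1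
    (Eventually.of_forall fun ω => abs_le.mpr ⟨by linarith [hY_nonneg ω], hY_le ω⟩)
  have hY_pos : ∀ᵐ ω ∂μ, 0 < Y ω := by
    filter_upwards [hz_pos] with ω h
    exact mul_pos (hr_pos ω) h
  have hYS0_bound : ∀ᵐ ω ∂μ, |Y ω * S0 ω| ≤ 1 := by
    filter_upwards [hd_pos] with ω hd
    rw [abs_mul, abs_of_nonneg (hY_nonneg ω)]; simp only [hY_def]
    have h1 : |S0 ω| * Real.exp (-|S0 ω|) ≤ 1 := xexp_le _
    have h2 : min (d ω) 1 / d ω ≤ 1 := (div_le_one hd).mpr (min_le_left _ _)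
    have h3 : 0 ≤ min (d ω) 1 / d ω := div_nonneg (le_min hd.le zero_le_one) hd.le
    have hr_eq : r ω = Real.exp (-|S0 ω|) * min (d ω) 1 / d ω := by
      simp only [hr_def]; rw [if_pos hd]
    calc r ω * z ω * |S0 ω| ≤ r ω * 1 * |S0 ω| := by
          refine mul_le_mul_of_nonneg_right ?_ (abs_nonneg _)
          exact mul_le_mul_of_nonneg_left (hz_le ω) (hr_pos ω).le
      _ = (|S0 ω| * Real.exp (-|S0 ω|)) * (min (d ω) 1 / d ω) := by
          rw [hr_eq]; ring
      _ ≤ 1 * 1 := mul_le_mul h1 h2 h3 zero_le_one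
      _ = 1 := one_mul 1
  have hYX_bound : ∀ ω, |Y ω * X ω| ≤ 1 := by
    intro ω
    have : Y ω * X ω = r ω * (z ω * X ω) := by simp only [hY_def]; ring
    rw [this, abs_mul, abs_of_nonneg (hr_pos ω).le]
    calc r ω * |z ω * X ω| ≤ 1 * 1 :=
          mul_le_mul (hr_le ω) (hzX_bound ω) (abs_nonneg _) zero_le_one
      _ = 1 := one_mul 1
  have hYX_int : Integrable (fun ω => Y ω * X ω) μ := integrable_of_bound
    ((hY_meas.mul hX).mono hm' le_rfl).aestronglyMeasurable 1
    (Eventually.of_forall hYX_bound)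
  have condYX : μ[fun ω => Y ω * X ω|m] =ᵐ[μ] 0 := by
    have heq : (fun ω => Y ω * X ω) = r * fun ω => z ω * X ω := by
      funext ω
      rw [Pi.mul_apply]; simp only [hY_def]
      ring
    rw [heq]
    calc μ[r * fun ω => z ω * X ω|m] =ᵐ[μ] r * μ[fun ω => z ω * X ω|m] :=
          condExp_mul_of_stronglyMeasurable_left hr_meas.stronglyMeasurable (heq ▸ hYX_int) hzX_int
      _ =ᵐ[μ] 0 := by
          filter_upwards [cond1] with ω hω
          simp [hω]
  have setInt : ∀ s : Set α, MeasurableSet[m] s → ∫ ω in s, Y ω * X ω ∂μ = 0 := by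
    intro s hs
    rw [← setIntegral_condExp hm0 hYX_int hs]
    rw [integral_congr_ae (ae_restrict_of_ae condYX)]
    simp
  set I : ℝ := ∫ ω, Y ω ∂μ with hI_def
  have hI_nonneg : 0 ≤ I := integral_nonneg hY_nonneg
  have hI_ne : I ≠ 0 := by
    intro h
    have hY0 : Y =ᵐ[μ] 0 :=
      (integral_eq_zero_iff_of_nonneg_ae (Eventually.of_forall hY_nonneg) hY_int).mp h
    haveI : (ae μ).NeBot := ae_neBot.mpr (IsProbabilityMeasure.ne_zero μ)
    obtain ⟨ω, h0, hpos⟩ := (hY0.and hY_pos).exists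
    rw [h0] at hpos
    exact lt_irrefl _ hpos
  have hI_pos : 0 < I := lt_of_le_of_ne hI_nonneg (Ne.symm hI_ne)
  refine ⟨fun ω => I⁻¹ * Y ω, measurable_const.mul hY_meas,
    fun ω => mul_nonneg (inv_nonneg.mpr hI_nonneg) (hY_nonneg ω), ?_, ⟨I⁻¹, ?_⟩, ?_,
    ⟨I⁻¹, ?_⟩, ⟨I⁻¹, ?_⟩, ?_⟩
  · filter_upwards [hY_pos] with ω h
    exact mul_pos (inv_pos.mpr hI_pos) h
  · intro ω
    calc I⁻¹ * Y ω ≤ I⁻¹ * 1 := mul_le_mul_of_nonneg_left (hY_le ω) (inv_nonneg.mpr hI_nonneg)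
      _ = I⁻¹ := mul_one _
  · rw [integral_const_mul, inv_mul_cancel₀ hI_ne]
  · filter_upwards [hYS0_bound] with ω h
    have : I⁻¹ * Y ω * S0 ω = I⁻¹ * (Y ω * S0 ω) := by ring
    rw [this, abs_mul, abs_of_nonneg (inv_nonneg.mpr hI_nonneg)]
    calc I⁻¹ * |Y ω * S0 ω| ≤ I⁻¹ * 1 := mul_le_mul_of_nonneg_left h (inv_nonneg.mpr hI_nonneg)
      _ = I⁻¹ := mul_one _
  · intro ω
    have : I⁻¹ * Y ω * X ω = I⁻¹ * (Y ω * X ω) := by ring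
    rw [this, abs_mul, abs_of_nonneg (inv_nonneg.mpr hI_nonneg)]
    calc I⁻¹ * |Y ω * X ω| ≤ I⁻¹ * 1 :=
          mul_le_mul_of_nonneg_left (hYX_bound ω) (inv_nonneg.mpr hI_nonneg)
      _ = I⁻¹ := mul_one _
  · intro s hs
    have heq : ∀ ω, I⁻¹ * Y ω * X ω = I⁻¹ * (Y ω * X ω) := by
      intro ω
      ring
    change ∫ ω in s, I⁻¹ * Y ω * X ω ∂μ = 0
    simp_rw [heq]
    rw [integral_const_mul, setInt s hs, mul_zero]

private lemma wd_prob {α : Type*} {m0 : MeasurableSpace α} (μ : Measure α)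
    {Z : α → ℝ} (hZm : Measurable Z) (hZint : Integrable Z μ) (hZ0 : ∀ ω, 0 ≤ Z ω)
    (hZ1 : ∫ ω, Z ω ∂μ = 1) :
    IsProbabilityMeasure (μ.withDensity fun ω => ((Z ω).toNNReal : ℝ≥0∞)) := by
  constructor
  rw [withDensity_apply _ MeasurableSet.univ, setLIntegral_univ]
  have h1 : ∀ ω, ((Z ω).toNNReal : ℝ≥0∞) = ENNReal.ofReal (Z ω) := fun ω => rfl
  simp_rw [h1]
  rw [← ofReal_integral_eq_lintegral_ofReal hZint (Eventually.of_forall hZ0), hZ1]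
  simp

private lemma wd_ac {α : Type*} {m0 : MeasurableSpace α} (μ : Measure α)
    {Z : α → ℝ} (hZm : Measurable Z) (hZpos : ∀ᵐ ω ∂μ, 0 < Z ω) :
    μ ≪ μ.withDensity fun ω => ((Z ω).toNNReal : ℝ≥0∞) := by
  refine withDensity_absolutelyContinuous' hZm.real_toNNReal.coe_nnreal_ennreal.aemeasurable ?_
  filter_upwards [hZpos] with ω h
  simp only [ne_eq, ENNReal.coe_eq_zero]
  exact fun hc => absurd (Real.toNNReal_eq_zero.mp hc) (not_le.mpr h)

private lemma wd_integrable {α : Type*} {m0 : MeasurableSpace α} (μ : Measure α)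
    {Z : α → ℝ} (hZm : Measurable Z) (hZ0 : ∀ ω, 0 ≤ Z ω) {f : α → ℝ}
    (hf : Integrable (fun ω => Z ω * f ω) μ) :
    Integrable f (μ.withDensity fun ω => ((Z ω).toNNReal : ℝ≥0∞)) := by
  rw [integrable_withDensity_iff_integrable_smul hZm.real_toNNReal]
  refine hf.congr (Eventually.of_forall fun ω => ?_)
  simp only [NNReal.smul_def, Real.coe_toNNReal _ (hZ0 ω), smul_eq_mul]

private lemma wd_setIntegral {α : Type*} {m0 : MeasurableSpace α} (μ : Measure α)
    {Z : α → ℝ} (hZm : Measurable Z) (hZ0 : ∀ ω, 0 ≤ Z ω) (f : α → ℝ)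
    {s : Set α} (hs : MeasurableSet s) :
    ∫ ω in s, f ω ∂(μ.withDensity fun ω => ((Z ω).toNNReal : ℝ≥0∞)) =
      ∫ ω in s, Z ω * f ω ∂μ := by
  rw [setIntegral_withDensity_eq_setIntegral_smul hZm.real_toNNReal f hs]
  refine integral_congr_ae (Eventually.of_forall fun ω => ?_)
  simp only [NNReal.smul_def, Real.coe_toNNReal _ (hZ0 ω), smul_eq_mul]


/-- **Dalang–Morton–Willinger.** If every discrete-time simple outcome
`∑_{n=1}^N f_{n-1} (S_n - S_{n-1})` that is a.s. nonnegative is a.s. zero, then there is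
a probability measure `Q`, mutually absolutely continuous with `P`, making `S` a
`Q`-martingale. -/
theorem stmt5 (P : MeasureTheory.Measure Ω) [MeasureTheory.IsProbabilityMeasure P]
    (N : ℕ) (ℱ : MeasureTheory.Filtration ℕ m0)
    (S : ℕ → Ω → ℝ) (hadapted : ∀ n, n ≤ N → Measurable[ℱ n] (S n))
    (hNA : ∀ f : ℕ → Ω → ℝ, (∀ n, n < N → Measurable[ℱ n] (f n)) →
      (∀ᵐ ω ∂P, 0 ≤ ∑ n ∈ Finset.range N, f n ω * (S (n + 1) ω - S n ω)) →
      (∀ᵐ ω ∂P, ∑ n ∈ Finset.range N, f n ω * (S (n + 1) ω - S n ω) = 0)) :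
    ∃ Q : MeasureTheory.Measure Ω, MeasureTheory.IsProbabilityMeasure Q ∧
      Q ≪ P ∧ P ≪ Q ∧
      (∀ n, n ≤ N → MeasureTheory.Integrable (S n) Q) ∧
      (∀ n, n < N → Q[S (n + 1)|ℱ n] =ᵐ[Q] S n) := by
  induction N generalizing ℱ S with
  | zero =>
    obtain ⟨Z, hZmeas, hZ0, hZpos, ⟨C, hZle⟩, hZ1, ⟨C2, hZS0⟩, -, -⟩ :=
      onestep (m := ℱ 0) (m' := ℱ 0) le_rfl (ℱ.le 0) P (hadapted 0 le_rfl)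
        (hadapted 0 le_rfl)
        (fun f hf _ => Eventually.of_forall fun ω => by ring)
    have hZm0 : Measurable Z := hZmeas.mono (ℱ.le 0) le_rfl
    have hZint : Integrable Z P := integrable_of_bound
      hZm0.aestronglyMeasurable C (Eventually.of_forall fun ω =>
        abs_le.mpr ⟨by linarith [hZ0 ω, hZle ω], hZle ω⟩)
    refine ⟨P.withDensity fun ω => ((Z ω).toNNReal : ℝ≥0∞),
      wd_prob P hZm0 hZint hZ0 hZ1, withDensity_absolutelyContinuous _ _,
      wd_ac P hZm0 hZpos, ?_, fun n hn => absurd hn (Nat.not_lt_zero n)⟩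
    intro n hn
    interval_cases n
    refine wd_integrable P hZm0 hZ0 (integrable_of_bound ?_ C2 hZS0)
    exact (hZm0.mul ((hadapted 0 le_rfl).mono (ℱ.le 0) le_rfl)).aestronglyMeasurable
  | succ N ih =>
    -- the shifted filtration
    set ℱ' : MeasureTheory.Filtration ℕ m0 :=
      ⟨fun n => ℱ (n + 1), fun i j hij => ℱ.mono (by omega), fun n => ℱ.le _⟩ with hℱ'_def
    have hℱ'app : ∀ n, ℱ' n = ℱ (n + 1) := fun n => rfl
    have hNA' : ∀ f' : ℕ → Ω → ℝ, (∀ n, n < N → Measurable[ℱ' n] (f' n)) →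
        (∀ᵐ ω ∂P, 0 ≤ ∑ n ∈ Finset.range N, f' n ω * (S (n + 1 + 1) ω - S (n + 1) ω)) →
        ∀ᵐ ω ∂P, ∑ n ∈ Finset.range N, f' n ω * (S (n + 1 + 1) ω - S (n + 1) ω) = 0 := by
      intro f' hf' hpos
      set f : ℕ → Ω → ℝ := fun n ω => if n = 0 then 0 else f' (n - 1) ω with hf_def
      have hsum : ∀ ω, ∑ n ∈ Finset.range (N + 1), f n ω * (S (n + 1) ω - S n ω) =
          ∑ n ∈ Finset.range N, f' n ω * (S (n + 1 + 1) ω - S (n + 1) ω) := by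
        intro ω
        rw [Finset.sum_range_succ']
        simp [hf_def]
      have hfmeas : ∀ n, n < N + 1 → Measurable[ℱ n] (f n) := by
        intro n hn
        rcases n with - | k
        · simp only [hf_def, if_pos rfl]
          exact measurable_const
        · have : f (k + 1) = f' k := by
            funext ω
            simp [hf_def]
          rw [this]
          exact hf' k (by omega)
      have h1 := hNA f hfmeas (by filter_upwards [hpos] with ω hω; rw [hsum ω]; exact hω)
      filter_upwards [h1] with ω hω
      rw [← hsum ω]
      exact hω
    obtain ⟨Q', hQ'prob, hQ'P, hPQ', hint', hmart'⟩ :=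
      ih ℱ' (fun n => S (n + 1)) (fun n hn => hadapted (n + 1) (by omega)) hNA'
    haveI : IsProbabilityMeasure Q' := hQ'prob
    -- one-period no-arbitrage under Q' for the first step
    have hNA1 : ∀ f : Ω → ℝ, Measurable[ℱ 0] f →
        (∀ᵐ ω ∂Q', 0 ≤ f ω * (S 1 ω - S 0 ω)) →
        ∀ᵐ ω ∂Q', f ω * (S 1 ω - S 0 ω) = 0 := by
      intro f hf hpos
      set g : ℕ → Ω → ℝ := fun n ω => if n = 0 then f ω else 0 with hg_def
      have hsum : ∀ ω, ∑ n ∈ Finset.range (N + 1), g n ω * (S (n + 1) ω - S n ω) =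
          f ω * (S 1 ω - S 0 ω) := by
        intro ω
        rw [Finset.sum_range_succ']
        simp [hg_def]
      have hgmeas : ∀ n, n < N + 1 → Measurable[ℱ n] (g n) := by
        intro n hn
        rcases n with - | k
        · simp only [hg_def, if_pos rfl]
          exact hf
        · simp only [hg_def]
          exact measurable_const
      have h1 := hNA g hgmeas (by
        filter_upwards [hPQ'.ae_le hpos] with ω hω
        rw [hsum ω]
        exact hω)
      filter_upwards [hQ'P.ae_le h1] with ω hω
      rw [hsum ω] at hω
      exact hω
    obtain ⟨Z, hZmeas, hZ0, hZpos, ⟨C, hZle⟩, hZ1, ⟨C2, hZS0⟩, ⟨C3, hZX⟩, hsetInt⟩ :=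
      onestep (m := ℱ 0) (m' := ℱ 1) (ℱ.mono (by omega)) (ℱ.le 1) Q'
        (hadapted 0 (by omega)) (hadapted 1 (by omega)) hNA1
    have hZm0 : Measurable Z := hZmeas.mono (ℱ.le 1) le_rfl
    have hZint : Integrable Z Q' := integrable_of_bound
      hZm0.aestronglyMeasurable C (Eventually.of_forall fun ω =>
        abs_le.mpr ⟨by linarith [hZ0 ω, hZle ω], hZle ω⟩)
    set Q : Measure Ω := Q'.withDensity fun ω => ((Z ω).toNNReal : ℝ≥0∞) with hQ_def
    haveI hQprob : IsProbabilityMeasure Q := wd_prob Q' hZm0 hZint hZ0 hZ1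
    -- integrability of all S n under Q
    have hint_all : ∀ n, n ≤ N + 1 → Integrable (S n) Q := by
      intro n hn
      rcases n with - | k
      · refine wd_integrable Q' hZm0 hZ0 (integrable_of_bound ?_ C2 hZS0)
        exact (hZm0.mul ((hadapted 0 (by omega)).mono (ℱ.le 0) le_rfl)).aestronglyMeasurable
      · refine wd_integrable Q' hZm0 hZ0 ?_
        refine (hint' k (by omega)).bdd_mul hZm0.aestronglyMeasurable (c := C) (Eventually.of_forall fun ω => ?_)
        rw [Real.norm_eq_abs, abs_of_nonneg (hZ0 ω)]
        exact hZle ω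
    -- the key set-integral property : for s ∈ ℱ n, n ≤ N, ∫_s Z·(S (n+1) - S n) dQ' = 0
    have hkey : ∀ n, n < N + 1 → ∀ s : Set Ω, MeasurableSet[ℱ n] s →
        ∫ ω in s, Z ω * (S (n + 1) ω - S n ω) ∂Q' = 0 := by
      intro n hn s hs
      rcases n with - | k
      · exact hsetInt s hs
      · -- use the martingale property of the shifted process under Q'
        have hk : k < N := by omega
        have hmk : ℱ (k + 1) ≤ m0 := ℱ.le (k + 1)
        set X : Ω → ℝ := fun ω => S (k + 2) ω - S (k + 1) ω with hX_def
        have hXint : Integrable X Q' := by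
          have h1 : Integrable (S (k + 2)) Q' := hint' (k + 1) (by omega)
          have h2 : Integrable (S (k + 1)) Q' := hint' k (by omega)
          exact h1.sub h2
        have hcond : Q'[X|ℱ (k + 1)] =ᵐ[Q'] 0 := by
          have h1 : Q'[S (k + 2)|ℱ (k + 1)] =ᵐ[Q'] S (k + 1) := hmart' k hk
          have h2 : Q'[S (k + 1)|ℱ (k + 1)] = S (k + 1) :=
            condExp_of_stronglyMeasurable hmk
              ((hadapted (k + 1) (by omega)).stronglyMeasurable) (hint' k (by omega))
          have h3 : Q'[X|ℱ (k + 1)] =ᵐ[Q'] Q'[S (k + 2)|ℱ (k + 1)] - Q'[S (k + 1)|ℱ (k + 1)] := by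
            have := condExp_sub (μ := Q') (m := ℱ (k + 1))
              (hint' (k + 1) (by omega)) (hint' k (by omega))
            exact this
          calc Q'[X|ℱ (k + 1)]
              =ᵐ[Q'] Q'[S (k + 2)|ℱ (k + 1)] - Q'[S (k + 1)|ℱ (k + 1)] := h3
            _ =ᵐ[Q'] S (k + 1) - S (k + 1) := by
                rw [h2]
                filter_upwards [h1] with ω hω
                simp only [Pi.sub_apply]
                rw [hω]
            _ =ᵐ[Q'] 0 := by
                refine Eventually.of_forall fun ω => ?_
                simp
        set g : Ω → ℝ := fun ω => Set.indicator s (fun _ => (1:ℝ)) ω * Z ω with hg_def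
        have hg_sm : StronglyMeasurable[ℱ (k + 1)] g := by
          refine StronglyMeasurable.mul ?_ ?_
          · exact stronglyMeasurable_const.indicator hs
          · exact ((hZmeas.mono (ℱ.mono (by omega)) le_rfl) :
              Measurable[ℱ (k + 1)] Z).stronglyMeasurable
        have hg_bdd : ∃ C', ∀ ω, ‖g ω‖ ≤ C' := by
          refine ⟨max C 0, fun ω => ?_⟩
          simp only [hg_def]
          rw [Real.norm_eq_abs, abs_mul]
          by_cases hmem : ω ∈ s
          · rw [Set.indicator_of_mem hmem]
            simp only [abs_one, one_mul]
            rw [abs_of_nonneg (hZ0 ω)]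
            exact le_max_of_le_left (hZle ω)
          · rw [Set.indicator_of_notMem hmem]
            simp
        have hgX_int : Integrable (g * X) Q' := by
          have := hXint.bdd_mul ((hg_sm.mono hmk).aestronglyMeasurable) (Eventually.of_forall hg_bdd.choose_spec)
          exact this.congr (Eventually.of_forall fun ω => rfl)
        have hpull : Q'[g * X|ℱ (k + 1)] =ᵐ[Q'] g * Q'[X|ℱ (k + 1)] :=
          condExp_mul_of_stronglyMeasurable_left hg_sm hgX_int hXint
        have hzero : ∫ ω, g ω * X ω ∂Q' = 0 := by
          have e1 : ∫ ω, g ω * X ω ∂Q' = ∫ ω, (Q'[g * X|ℱ (k + 1)]) ω ∂Q' :=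
            (integral_condExp hmk).symm
          rw [e1, integral_congr_ae hpull]
          have : (g * Q'[X|ℱ (k + 1)]) =ᵐ[Q'] 0 := by
            filter_upwards [hcond] with ω hω
            simp only [Pi.mul_apply, hω]
            simp
          rw [integral_congr_ae this]
          simp
        have e2 : ∫ ω in s, Z ω * (S (k + 1 + 1) ω - S (k + 1) ω) ∂Q' =
            ∫ ω, g ω * X ω ∂Q' := by
          rw [← integral_indicator (hmk s hs)]
          refine integral_congr_ae (Eventually.of_forall fun ω => ?_)
          simp only [hg_def, hX_def]
          by_cases hmem : ω ∈ s
          · rw [Set.indicator_of_mem hmem, Set.indicator_of_mem hmem]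
            ring
          · rw [Set.indicator_of_notMem hmem, Set.indicator_of_notMem hmem]
            ring
        rw [e2, hzero]
    refine ⟨Q, hQprob, (withDensity_absolutelyContinuous _ _).trans hQ'P,
      hPQ'.trans (wd_ac Q' hZm0 hZpos), hint_all, ?_⟩
    intro n hn
    haveI : SigmaFinite (Q.trim (ℱ.le n)) := by
      haveI : IsFiniteMeasure (Q.trim (ℱ.le n)) := isFiniteMeasure_trim _
      infer_instance
    refine (ae_eq_condExp_of_forall_setIntegral_eq (ℱ.le n)
      (hint_all (n + 1) (by omega))
      (fun s _ _ => (hint_all n (by omega)).integrableOn)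
      (fun s hs _ => ?_)
      (StronglyMeasurable.aestronglyMeasurable
        ((hadapted n (by omega)).stronglyMeasurable))).symm
    have hs0 : MeasurableSet s := ℱ.le n s hs
    rw [wd_setIntegral Q' hZm0 hZ0 (S n) hs0, wd_setIntegral Q' hZm0 hZ0 (S (n + 1)) hs0]
    have hi1 : IntegrableOn (fun ω => Z ω * S (n + 1) ω) s Q' := by
      refine Integrable.integrableOn ?_
      refine (hint' n (by omega)).bdd_mul hZm0.aestronglyMeasurable (c := C) (Eventually.of_forall fun ω => ?_)
      rw [Real.norm_eq_abs, abs_of_nonneg (hZ0 ω)]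
      exact hZle ω
    have hi0 : IntegrableOn (fun ω => Z ω * S n ω) s Q' := by
      rcases n with - | k
      · exact (integrable_of_bound ((hZm0.mul ((hadapted 0 (by omega)).mono (ℱ.le 0)
          le_rfl)).aestronglyMeasurable) C2 hZS0).integrableOn
      · refine Integrable.integrableOn ?_
        refine (hint' k (by omega)).bdd_mul hZm0.aestronglyMeasurable (c := C) (Eventually.of_forall fun ω => ?_)
        rw [Real.norm_eq_abs, abs_of_nonneg (hZ0 ω)]
        exact hZle ω
    have hd := hkey n hn s hs
    have e3 : ∫ ω in s, Z ω * (S (n + 1) ω - S n ω) ∂Q' =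
        (∫ ω in s, Z ω * S (n + 1) ω ∂Q') - ∫ ω in s, Z ω * S n ω ∂Q' := by
      rw [← integral_sub hi1 hi0]
      refine integral_congr_ae (Eventually.of_forall fun ω => ?_)
      ring
    rw [e3] at hd
    linarith [hd]
end

section
/- Let X = (X_t)_{t≥0} be a càdlàg process adapted to 𝔽. Then X satisfies the no arbitrage property in the class S(𝔽) of simple predictable integrands of bounded support if and only if for every pair of bounded 𝔽-stopping times τ₀ ≤ τ₁ and every A ∈ F_{τ₀}, the random variable 1_A·(X_{τ₁} − X_{τ₀}) belongs to L⁰_{+−}. -/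
open MeasureTheory ProbabilityTheory Filter Set
open scoped NNReal ENNReal

variable {Ω : Type*} {m0 : MeasurableSpace Ω}

set_option maxHeartbeats 1000000 in
theorem progMeasurable_of_rightContinuous {ℱ : MeasureTheory.Filtration ℝ≥0 m0}
    {X : ℝ≥0 → Ω → ℝ} (ha : MeasureTheory.Adapted ℱ X)
    (hrc : ∀ ω (t : ℝ≥0), ContinuousWithinAt (fun s => X s ω) (Set.Ici t) t) :
    MeasureTheory.ProgMeasurable ℱ X := by
  intro i
  have h2k : ∀ k : ℕ, (0:ℝ≥0) < 2 ^ k := fun k => pow_pos (by norm_num) k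
  set d : ℕ → ℝ≥0 → ℝ≥0 := fun k s => min ((⌈s * 2 ^ k⌉₊ : ℝ≥0) / 2 ^ k) i with hd
  have key : ∀ k : ℕ, StronglyMeasurable[Subtype.instMeasurableSpace.prod (ℱ i)]
      (fun p : Set.Iic i × Ω => X (d k (p.1 : ℝ≥0)) p.2) := by
    intro k
    apply Measurable.stronglyMeasurable
    have hg : Measurable[(ℱ i).prod ⊤] (fun q : Ω × ℕ => X (min ((q.2 : ℝ≥0) / 2 ^ k) i) q.1) := by
      refine measurable_from_prod_countable_left fun q => ?_
      show Measurable[ℱ i] fun ω => X (min ((q : ℝ≥0) / 2 ^ k) i) ω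
      exact (ha _).mono (ℱ.mono (min_le_right _ _)) le_rfl
    have hc : Measurable (fun x : ℝ≥0 => (⌈x * 2 ^ k⌉₊ : ℕ)) := by
      have h : Monotone (fun x : ℝ≥0 => (⌈x * 2 ^ k⌉₊ : ℕ)) :=
        Nat.ceil_mono.comp (fun a b hab => mul_le_mul_left hab _)
      exact h.measurable
    have hm : @Measurable (Set.Iic i × Ω) (Ω × ℕ) (Subtype.instMeasurableSpace.prod (ℱ i))
        ((ℱ i).prod ⊤)
        (fun p : Set.Iic i × Ω => ((p.2, (⌈(p.1 : ℝ≥0) * 2 ^ k⌉₊ : ℕ)) : Ω × ℕ)) := by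
      refine Measurable.prodMk measurable_snd ?_
      exact (hc.mono le_rfl le_top).comp (measurable_subtype_coe.comp measurable_fst)
    have := hg.comp hm
    rw [hd]; exact this
  refine stronglyMeasurable_of_tendsto atTop key (tendsto_pi_nhds.mpr fun p => ?_)
  obtain ⟨⟨s, hs⟩, ω⟩ := p
  simp only [Set.mem_Iic] at hs
  have hlb : ∀ k, s ≤ d k s := by
    intro k
    refine le_min ?_ hs
    rw [le_div_iff₀ (h2k k)]
    exact Nat.le_ceil _
  have hub : ∀ k, d k s ≤ s + ((2:ℝ≥0) ^ k)⁻¹ := by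
    intro k
    refine (min_le_left _ _).trans ?_
    rw [div_le_iff₀ (h2k k)]
    calc (⌈s * 2 ^ k⌉₊ : ℝ≥0) ≤ s * 2 ^ k + 1 := (Nat.ceil_lt_add_one zero_le).le
      _ = (s + ((2:ℝ≥0) ^ k)⁻¹) * 2 ^ k := by
          rw [add_mul, inv_mul_cancel₀ (h2k k).ne']
  have htend : Tendsto (fun k => d k s) atTop (nhds s) := by
    have h0 : Tendsto (fun k : ℕ => s + ((2:ℝ≥0) ^ k)⁻¹) atTop (nhds s) := by
      have : Tendsto (fun k:ℕ => ((2:ℝ≥0)^k)⁻¹) atTop (nhds 0) := by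
        simp_rw [← inv_pow]
        refine NNReal.tendsto_pow_atTop_nhds_zero_of_lt_one ?_
        rw [← NNReal.coe_lt_coe]; norm_num
      simpa using tendsto_const_nhds.add this
    exact tendsto_of_tendsto_of_tendsto_of_le_of_le tendsto_const_nhds h0 hlb hub
  have htendW : Tendsto (fun k => d k s) atTop (nhdsWithin s (Set.Ici s)) :=
    tendsto_nhdsWithin_of_tendsto_nhds_of_eventually_within _ htend
      (Filter.Eventually.of_forall hlb)
  exact (hrc ω s).tendsto.comp htendW


namespace SimpleStrategy
variable {ℱ : MeasureTheory.Filtration ℝ≥0 m0} (H : SimpleStrategy ℱ)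

lemma tau_le {j k : ℕ} (h1 : 1 ≤ j) (hjk : j ≤ k) (hk : k ≤ H.n) (ω : Ω) :
    H.τ j ω ≤ H.τ k ω := by
  induction k, hjk using Nat.le_induction with
  | base => exact le_rfl
  | succ k hk' ih =>
      exact (ih (by omega)).trans (H.mono k (by omega) (by omega) ω)

lemma tau_bounded {j : ℕ} (h1 : 1 ≤ j) (hj : j ≤ H.n) : ∃ T : ℝ≥0, ∀ ω, H.τ j ω ≤ T := by
  obtain ⟨T, hT⟩ := H.bounded
  exact ⟨T, fun ω => (H.tau_le h1 hj le_rfl ω).trans (hT ω)⟩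

lemma partial_meas {X : ℝ≥0 → Ω → ℝ} (hprog : MeasureTheory.ProgMeasurable ℱ X)
    {m : ℕ} (h1 : 1 ≤ m) (hm : m ≤ H.n) :
    Measurable[(H.stopping m h1 hm).measurableSpace]
      (fun ω => ∑ j ∈ Finset.Ico 1 m, H.g j ω * (X (H.τ (j+1) ω) ω - X (H.τ j ω) ω)) := by
  apply Finset.measurable_sum
  intro j hj
  obtain ⟨hj1, hjm⟩ := Finset.mem_Ico.mp hj
  have hjn : j < H.n := lt_of_lt_of_le hjm hm
  have hsj := H.stopping j hj1 hjn.le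
  have hsj1 := H.stopping (j+1) (by omega) (by omega)
  have hle_j : hsj.measurableSpace ≤ (H.stopping m h1 hm).measurableSpace :=
    MeasureTheory.IsStoppingTime.measurableSpace_mono _ _
      (fun ω => WithTop.coe_le_coe.mpr (H.tau_le hj1 (by omega) hm ω))
  have hle_j1 : hsj1.measurableSpace ≤ (H.stopping m h1 hm).measurableSpace :=
    MeasureTheory.IsStoppingTime.measurableSpace_mono _ _
      (fun ω => WithTop.coe_le_coe.mpr (H.tau_le (by omega) (by omega) hm ω))
  have hXj1 : Measurable[(H.stopping m h1 hm).measurableSpace]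
      (fun ω => X (H.τ (j+1) ω) ω) :=
    (MeasureTheory.measurable_stoppedValue hprog hsj1).mono hle_j1 le_rfl
  have hXj : Measurable[(H.stopping m h1 hm).measurableSpace]
      (fun ω => X (H.τ j ω) ω) :=
    (MeasureTheory.measurable_stoppedValue hprog hsj).mono hle_j le_rfl
  exact ((H.g_meas j hj1 hjn).mono hle_j le_rfl).mul (hXj1.sub hXj)

end SimpleStrategy

lemma keyStep (μ : MeasureTheory.Measure Ω) {ℱ : MeasureTheory.Filtration ℝ≥0 m0}
    {X : ℝ≥0 → Ω → ℝ}
    (hyp : ∀ (τ0 τ1 : Ω → ℝ≥0)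
        (hτ0 : MeasureTheory.IsStoppingTime ℱ (fun ω => ((τ0 ω : ℝ≥0) : WithTop ℝ≥0)))
        (_hτ1 : MeasureTheory.IsStoppingTime ℱ (fun ω => ((τ1 ω : ℝ≥0) : WithTop ℝ≥0))),
        (∃ T : ℝ≥0, ∀ ω, τ0 ω ≤ T) → (∃ T : ℝ≥0, ∀ ω, τ1 ω ≤ T) →
        (∀ ω, τ0 ω ≤ τ1 ω) →
        ∀ A : Set Ω, MeasurableSet[hτ0.measurableSpace] A →
          MemLzeroPM μ (A.indicator fun ω => X (τ1 ω) ω - X (τ0 ω) ω))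
    {σ τ : Ω → ℝ≥0} (hσ : MeasureTheory.IsStoppingTime ℱ (fun ω => ((σ ω : ℝ≥0) : WithTop ℝ≥0)))
    (hτ : MeasureTheory.IsStoppingTime ℱ (fun ω => ((τ ω : ℝ≥0) : WithTop ℝ≥0)))
    (hbσ : ∃ T : ℝ≥0, ∀ ω, σ ω ≤ T) (hbτ : ∃ T : ℝ≥0, ∀ ω, τ ω ≤ T)
    (hle : ∀ ω, σ ω ≤ τ ω)
    {g : Ω → ℝ} (hg : Measurable[hσ.measurableSpace] g)
    (hnn : ∀ᵐ ω ∂μ, 0 ≤ g ω * (X (τ ω) ω - X (σ ω) ω))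
    (hpos : 0 < μ {ω | 0 < g ω * (X (τ ω) ω - X (σ ω) ω)}) : False := by
  set D : Ω → ℝ := fun ω => X (τ ω) ω - X (σ ω) ω with hD
  have hA1 : MeasurableSet[hσ.measurableSpace] {ω | 0 < g ω} :=
    measurableSet_lt measurable_const hg
  have hA2 : MeasurableSet[hσ.measurableSpace] {ω | g ω < 0} :=
    measurableSet_lt hg measurable_const
  have h1 := (hyp σ τ hσ hτ hbσ hbτ hle _ hA1).1
  have h2 := (hyp σ τ hσ hτ hbσ hbτ hle _ hA2).2
  have hnn1 : ∀ᵐ ω ∂μ, 0 ≤ ({ω | 0 < g ω}.indicator D) ω := by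
    filter_upwards [hnn] with ω h
    by_cases hω : ω ∈ {ω | 0 < g ω}
    · rw [Set.indicator_of_mem hω]
      have h2' : 0 ≤ g ω * D ω := h
      have : 0 < g ω := hω
      nlinarith [h2']
    · rw [Set.indicator_of_notMem hω]
  have hnp2 : ∀ᵐ ω ∂μ, ({ω | g ω < 0}.indicator D) ω ≤ 0 := by
    filter_upwards [hnn] with ω h
    by_cases hω : ω ∈ {ω | g ω < 0}
    · rw [Set.indicator_of_mem hω]
      have h2' : 0 ≤ g ω * D ω := h
      have : g ω < 0 := hω
      nlinarith [h2']
    · rw [Set.indicator_of_notMem hω]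
  have hz1 : μ {ω | 0 < ({ω | 0 < g ω}.indicator D) ω} = 0 := by
    by_contra hc
    exact h1 ⟨hnn1, pos_iff_ne_zero.mpr hc⟩
  have hz2 : μ {ω | ({ω | g ω < 0}.indicator D) ω < 0} = 0 := by
    by_contra hc
    exact h2 ⟨hnp2, pos_iff_ne_zero.mpr hc⟩
  have hsub : {ω | 0 < g ω * D ω} ⊆
      {ω | 0 < ({ω | 0 < g ω}.indicator D) ω} ∪
      {ω | ({ω | g ω < 0}.indicator D) ω < 0} := by
    intro ω hω
    have hω' : 0 < g ω * D ω := hω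
    rcases lt_trichotomy (g ω) 0 with h | h | h
    · right
      have hmem : ω ∈ {ω | g ω < 0} := h
      show ({ω | g ω < 0}.indicator D) ω < 0
      rw [Set.indicator_of_mem hmem]
      nlinarith
    · exfalso; rw [h] at hω'; simp at hω'
    · left
      have hmem : ω ∈ {ω | 0 < g ω} := h
      show 0 < ({ω | 0 < g ω}.indicator D) ω
      rw [Set.indicator_of_mem hmem]
      nlinarith
  have : μ {ω | 0 < g ω * D ω} = 0 :=
    le_antisymm (le_trans (measure_mono hsub)
      (le_trans (measure_union_le _ _) (by rw [hz1, hz2]; simp))) zero_le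
  rw [hD] at this
  exact absurd hpos (by rw [this]; simp)

def twoStep {ℱ : MeasureTheory.Filtration ℝ≥0 m0} (τ0 τ1 : Ω → ℝ≥0)
    (hτ0 : MeasureTheory.IsStoppingTime ℱ (fun ω => ((τ0 ω : ℝ≥0) : WithTop ℝ≥0))) (hτ1 : MeasureTheory.IsStoppingTime ℱ (fun ω => ((τ1 ω : ℝ≥0) : WithTop ℝ≥0)))
    (hb1 : ∃ T : ℝ≥0, ∀ ω, τ1 ω ≤ T) (hle : ∀ ω, τ0 ω ≤ τ1 ω)
    (g : Ω → ℝ) (hg : Measurable[hτ0.measurableSpace] g) : SimpleStrategy ℱ where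
  n := 2
  two_le := le_rfl
  g0 := 0
  τ := fun j => if j ≤ 1 then τ0 else τ1
  g := fun _ => g
  stopping := by
    intro j h1 h2
    interval_cases j
    · simpa using hτ0
    · simpa using hτ1
  mono := by
    intro j h1 h2 ω
    interval_cases j
    simpa using hle ω
  bounded := by
    obtain ⟨T, hT⟩ := hb1
    exact ⟨T, by simpa using hT⟩
  g_meas := by
    intro j h1 h2
    interval_cases j
    exact hg

lemma twoStep_gains {ℱ : MeasureTheory.Filtration ℝ≥0 m0} (τ0 τ1 : Ω → ℝ≥0)
    (hτ0 : MeasureTheory.IsStoppingTime ℱ (fun ω => ((τ0 ω : ℝ≥0) : WithTop ℝ≥0))) (hτ1 : MeasureTheory.IsStoppingTime ℱ (fun ω => ((τ1 ω : ℝ≥0) : WithTop ℝ≥0)))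
    (hb1 : ∃ T : ℝ≥0, ∀ ω, τ1 ω ≤ T) (hle : ∀ ω, τ0 ω ≤ τ1 ω)
    (g : Ω → ℝ) (hg : Measurable[hτ0.measurableSpace] g) (X : ℝ≥0 → Ω → ℝ) (ω : Ω) :
    (twoStep τ0 τ1 hτ0 hτ1 hb1 hle g hg).gains X ω = g ω * (X (τ1 ω) ω - X (τ0 ω) ω) := by
  simp [SimpleStrategy.gains, twoStep, Finset.sum_Ico_eq_sum_range]


/-- **Lemma 5.** A càdlàg adapted process `X` has no arbitrage in the class `S(𝔽)` of
simple predictable integrands of bounded support iff for every pair of bounded stopping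
times `τ₀ ≤ τ₁` and every `A ∈ F_{τ₀}`, `1_A (X_{τ₁} - X_{τ₀}) ∈ L⁰_{+-}`. -/
theorem stmt9 (μ : MeasureTheory.Measure Ω) [MeasureTheory.IsProbabilityMeasure μ]
    (ℱ : MeasureTheory.Filtration ℝ≥0 m0)
    (X : ℝ≥0 → Ω → ℝ) (hadapted : MeasureTheory.Adapted ℱ X) (hcadlag : IsCadlag X) :
    NoArbitrageSimple μ ℱ X ↔
      ∀ (τ0 τ1 : Ω → ℝ≥0)
        (hτ0 : MeasureTheory.IsStoppingTime ℱ (fun ω => ((τ0 ω : ℝ≥0) : WithTop ℝ≥0)))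
        (_hτ1 : MeasureTheory.IsStoppingTime ℱ (fun ω => ((τ1 ω : ℝ≥0) : WithTop ℝ≥0))),
        (∃ T : ℝ≥0, ∀ ω, τ0 ω ≤ T) → (∃ T : ℝ≥0, ∀ ω, τ1 ω ≤ T) →
        (∀ ω, τ0 ω ≤ τ1 ω) →
        ∀ A : Set Ω, MeasurableSet[hτ0.measurableSpace] A →
          MemLzeroPM μ (A.indicator fun ω => X (τ1 ω) ω - X (τ0 ω) ω) := by
  have hprog : MeasureTheory.ProgMeasurable ℱ X :=
    progMeasurable_of_rightContinuous hadapted (fun ω t => (hcadlag ω).1 t)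
  constructor
  · -- no arbitrage → condition
    intro hNA τ0 τ1 hτ0 hτ1 hb0 hb1 hle A hA
    constructor
    · rintro ⟨hae, hpos⟩
      refine hNA ⟨twoStep τ0 τ1 hτ0 hτ1 hb1 hle (A.indicator fun _ => (1:ℝ))
        (measurable_const.indicator hA), ?_, ?_⟩
      · filter_upwards [hae] with ω h
        rw [twoStep_gains]
        by_cases hm : ω ∈ A
        · simpa [Set.indicator_of_mem hm] using
            (by simpa [Set.indicator_of_mem hm] using h : (0:ℝ) ≤ X (τ1 ω) ω - X (τ0 ω) ω)
        · simp [Set.indicator_of_notMem hm]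
      · have hset : {ω | 0 < (twoStep τ0 τ1 hτ0 hτ1 hb1 hle (A.indicator fun _ => (1:ℝ))
            (measurable_const.indicator hA)).gains X ω} =
            {ω | 0 < A.indicator (fun ω => X (τ1 ω) ω - X (τ0 ω) ω) ω} := by
          ext ω
          rw [Set.mem_setOf_eq, Set.mem_setOf_eq, twoStep_gains]
          by_cases hm : ω ∈ A
          · simp [Set.indicator_of_mem hm]
          · simp [Set.indicator_of_notMem hm]
        rw [hset]
        exact hpos
    · rintro ⟨hae, hpos⟩
      refine hNA ⟨twoStep τ0 τ1 hτ0 hτ1 hb1 hle (A.indicator fun _ => (-1:ℝ))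
        (measurable_const.indicator hA), ?_, ?_⟩
      · filter_upwards [hae] with ω h
        rw [twoStep_gains]
        by_cases hm : ω ∈ A
        · have h' : X (τ1 ω) ω - X (τ0 ω) ω ≤ 0 := by
            simpa [Set.indicator_of_mem hm] using h
          simp only [Set.indicator_of_mem hm]
          nlinarith
        · simp [Set.indicator_of_notMem hm]
      · have hset : {ω | 0 < (twoStep τ0 τ1 hτ0 hτ1 hb1 hle (A.indicator fun _ => (-1:ℝ))
            (measurable_const.indicator hA)).gains X ω} =
            {ω | A.indicator (fun ω => X (τ1 ω) ω - X (τ0 ω) ω) ω < 0} := by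
          ext ω
          rw [Set.mem_setOf_eq, Set.mem_setOf_eq, twoStep_gains]
          by_cases hm : ω ∈ A
          · simp only [Set.indicator_of_mem hm]
            constructor
            · intro h; nlinarith
            · intro h; nlinarith
          · simp [Set.indicator_of_notMem hm]
        rw [hset]
        exact hpos
  · -- condition → no arbitrage
    rintro hyp ⟨H, hae, hpos⟩
    have main : ∀ m, 2 ≤ m → m ≤ H.n →
        ¬ ((∀ᵐ ω ∂μ, 0 ≤ ∑ j ∈ Finset.Ico 1 m,
              H.g j ω * (X (H.τ (j+1) ω) ω - X (H.τ j ω) ω)) ∧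
           0 < μ {ω | 0 < ∑ j ∈ Finset.Ico 1 m,
              H.g j ω * (X (H.τ (j+1) ω) ω - X (H.τ j ω) ω)}) := by
      intro m hm2
      induction m, hm2 using Nat.le_induction with
      | base =>
        rintro hn ⟨hae2, hpos2⟩
        have hsum : ∀ ω, (∑ j ∈ Finset.Ico 1 2,
            H.g j ω * (X (H.τ (j+1) ω) ω - X (H.τ j ω) ω)) =
            H.g 1 ω * (X (H.τ 2 ω) ω - X (H.τ 1 ω) ω) := by
          intro ω
          rw [Finset.sum_Ico_succ_top le_rfl]
          simp
        refine keyStep μ hyp (H.stopping 1 le_rfl (by omega)) (H.stopping 2 (by omega) hn)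
          (H.tau_bounded le_rfl (by omega)) (H.tau_bounded (by omega) hn)
          (H.mono 1 le_rfl (by omega)) (H.g_meas 1 le_rfl (by omega)) ?_ ?_
        · filter_upwards [hae2] with ω h
          rw [hsum ω] at h
          exact h
        · have : {ω | 0 < ∑ j ∈ Finset.Ico 1 2,
              H.g j ω * (X (H.τ (j+1) ω) ω - X (H.τ j ω) ω)} =
              {ω | 0 < H.g 1 ω * (X (H.τ 2 ω) ω - X (H.τ 1 ω) ω)} := by
            ext ω; rw [Set.mem_setOf_eq, Set.mem_setOf_eq, hsum ω]
          rw [← this]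
          exact hpos2
      | succ m hm ih =>
        rintro hn ⟨hae2, hpos2⟩
        have hmn : m ≤ H.n := by omega
        have hm1 : (1:ℕ) ≤ m := by omega
        have hmlt : m < H.n := by omega
        have hsplit : ∀ ω, (∑ j ∈ Finset.Ico 1 (m+1),
            H.g j ω * (X (H.τ (j+1) ω) ω - X (H.τ j ω) ω)) =
            (∑ j ∈ Finset.Ico 1 m, H.g j ω * (X (H.τ (j+1) ω) ω - X (H.τ j ω) ω)) +
            H.g m ω * (X (H.τ (m+1) ω) ω - X (H.τ m ω) ω) := fun ω =>
          Finset.sum_Ico_succ_top hm1 _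
        have hGmMeas : Measurable[(H.stopping m hm1 hmn).measurableSpace]
            (fun ω => ∑ j ∈ Finset.Ico 1 m,
              H.g j ω * (X (H.τ (j+1) ω) ω - X (H.τ j ω) ω)) :=
          H.partial_meas hprog hm1 hmn
        by_cases hB : μ {ω | (∑ j ∈ Finset.Ico 1 m,
            H.g j ω * (X (H.τ (j+1) ω) ω - X (H.τ j ω) ω)) < 0} = 0
        · have haeGm : ∀ᵐ ω ∂μ, 0 ≤ ∑ j ∈ Finset.Ico 1 m,
              H.g j ω * (X (H.τ (j+1) ω) ω - X (H.τ j ω) ω) := by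
            rw [MeasureTheory.ae_iff]
            simpa [not_le] using hB
          by_cases hGp : μ {ω | 0 < ∑ j ∈ Finset.Ico 1 m,
              H.g j ω * (X (H.τ (j+1) ω) ω - X (H.τ j ω) ω)} = 0
          · have haeGm0 : ∀ᵐ ω ∂μ, (∑ j ∈ Finset.Ico 1 m,
                H.g j ω * (X (H.τ (j+1) ω) ω - X (H.τ j ω) ω)) = 0 := by
              have h2 : ∀ᵐ ω ∂μ, ¬ 0 < ∑ j ∈ Finset.Ico 1 m,
                  H.g j ω * (X (H.τ (j+1) ω) ω - X (H.τ j ω) ω) := by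
                rw [MeasureTheory.ae_iff]
                simpa using hGp
              filter_upwards [haeGm, h2] with ω h1 h2
              exact le_antisymm (not_lt.mp h2) h1
            refine keyStep μ hyp (H.stopping m hm1 hmn) (H.stopping (m+1) (by omega) hn)
              (H.tau_bounded hm1 hmn) (H.tau_bounded (by omega) hn)
              (H.mono m hm1 hmlt) (H.g_meas m hm1 hmlt) ?_ ?_
            · filter_upwards [hae2, haeGm0] with ω h h0
              have := hsplit ω
              linarith
            · calc (0:ℝ≥0∞) < μ {ω | 0 < ∑ j ∈ Finset.Ico 1 (m+1),
                  H.g j ω * (X (H.τ (j+1) ω) ω - X (H.τ j ω) ω)} := hpos2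
                _ ≤ μ {ω | 0 < H.g m ω * (X (H.τ (m+1) ω) ω - X (H.τ m ω) ω)} := by
                  refine measure_mono_ae ?_
                  filter_upwards [haeGm0] with ω h0 hmem
                  have hmem' : 0 < ∑ j ∈ Finset.Ico 1 (m+1),
                      H.g j ω * (X (H.τ (j+1) ω) ω - X (H.τ j ω) ω) := hmem
                  have := hsplit ω
                  show 0 < H.g m ω * (X (H.τ (m+1) ω) ω - X (H.τ m ω) ω)
                  linarith
          · exact ih hmn ⟨haeGm, pos_iff_ne_zero.mpr hGp⟩
        · have hBmeas : MeasurableSet[(H.stopping m hm1 hmn).measurableSpace]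
              {ω | (∑ j ∈ Finset.Ico 1 m,
                H.g j ω * (X (H.τ (j+1) ω) ω - X (H.τ j ω) ω)) < 0} :=
            measurableSet_lt hGmMeas measurable_const
          refine keyStep μ hyp (H.stopping m hm1 hmn) (H.stopping (m+1) (by omega) hn)
            (H.tau_bounded hm1 hmn) (H.tau_bounded (by omega) hn)
            (H.mono m hm1 hmlt)
            (g := ({ω | (∑ j ∈ Finset.Ico 1 m,
                H.g j ω * (X (H.τ (j+1) ω) ω - X (H.τ j ω) ω)) < 0}).indicator (H.g m))
            ((H.g_meas m hm1 hmlt).indicator hBmeas) ?_ ?_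
          · filter_upwards [hae2] with ω h
            by_cases hmem : ω ∈ {ω | (∑ j ∈ Finset.Ico 1 m,
                H.g j ω * (X (H.τ (j+1) ω) ω - X (H.τ j ω) ω)) < 0}
            · rw [Set.indicator_of_mem hmem]
              have hneg : (∑ j ∈ Finset.Ico 1 m,
                  H.g j ω * (X (H.τ (j+1) ω) ω - X (H.τ j ω) ω)) < 0 := hmem
              have := hsplit ω
              linarith
            · rw [Set.indicator_of_notMem hmem, zero_mul]
          · calc (0:ℝ≥0∞) < μ {ω | (∑ j ∈ Finset.Ico 1 m,
                H.g j ω * (X (H.τ (j+1) ω) ω - X (H.τ j ω) ω)) < 0} :=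
                pos_iff_ne_zero.mpr hB
              _ ≤ _ := by
                refine measure_mono_ae ?_
                filter_upwards [hae2] with ω h hmem
                have hmem' : ω ∈ {ω | (∑ j ∈ Finset.Ico 1 m,
                    H.g j ω * (X (H.τ (j+1) ω) ω - X (H.τ j ω) ω)) < 0} := hmem
                have hneg : (∑ j ∈ Finset.Ico 1 m,
                    H.g j ω * (X (H.τ (j+1) ω) ω - X (H.τ j ω) ω)) < 0 := hmem'
                show 0 < ({ω | (∑ j ∈ Finset.Ico 1 m,
                    H.g j ω * (X (H.τ (j+1) ω) ω - X (H.τ j ω) ω)) < 0}).indicator (H.g m) ω *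
                    (X (H.τ (m+1) ω) ω - X (H.τ m ω) ω)
                rw [Set.indicator_of_mem hmem']
                have := hsplit ω
                linarith
    exact main H.n H.two_le le_rfl ⟨hae, hpos⟩
end

section
/- Let S = (S_t)_{t≥0} be a càdlàg process adapted to 𝔽 and let f be a strictly increasing or strictly decreasing real-valued function defined on a subset of ℝ containing the range of S. Then for every probability measure Q equivalent to P, the process S has no arbitrage in the class S(𝔽) of simple predictable integrands of bounded support under Q if and only if the process Y_t = f(S_t) has no arbitrage in S(𝔽) under Q. -/
open MeasureTheory ProbabilityTheory Filter Set
open scoped NNReal ENNReal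

variable {Ω : Type*} {m0 : MeasurableSpace Ω}

section Aux

variable {ℱ : MeasureTheory.Filtration ℝ≥0 m0} {μ : MeasureTheory.Measure Ω}

/-- sign transfer for products. -/
lemma naux_sign_mul (g s t : ℝ) (h1 : 0 < s ↔ 0 < t) (h2 : s < 0 ↔ t < 0) :
    (0 ≤ g * s ↔ 0 ≤ g * t) ∧ (0 < g * s ↔ 0 < g * t) := by
  constructor
  · rw [← not_lt, ← not_lt, mul_neg_iff, mul_neg_iff]; tauto
  · rw [mul_pos_iff, mul_pos_iff]; tauto

/-- stopped values are measurable w.r.t. the stopping σ-algebra. -/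
def SMeas (ℱ : MeasureTheory.Filtration ℝ≥0 m0) (X : ℝ≥0 → Ω → ℝ) : Prop :=
  ∀ (τ : Ω → ℝ≥0) (hτ : MeasureTheory.IsStoppingTime ℱ (fun ω => ((τ ω : ℝ≥0) : WithTop ℝ≥0))),
    Measurable[hτ.measurableSpace] (fun ω => X (τ ω) ω)

/-- existence of a one-step arbitrage. -/
def OneStep (μ : MeasureTheory.Measure Ω) (ℱ : MeasureTheory.Filtration ℝ≥0 m0)
    (X : ℝ≥0 → Ω → ℝ) : Prop :=
  ∃ (σ τ : Ω → ℝ≥0) (hσ : MeasureTheory.IsStoppingTime ℱ (fun ω => ((σ ω : ℝ≥0) : WithTop ℝ≥0)))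
    (_hτ : MeasureTheory.IsStoppingTime ℱ (fun ω => ((τ ω : ℝ≥0) : WithTop ℝ≥0))) (g : Ω → ℝ),
    (∀ ω, σ ω ≤ τ ω) ∧ (∃ T : ℝ≥0, ∀ ω, τ ω ≤ T) ∧
    Measurable[hσ.measurableSpace] g ∧
    (∀ᵐ ω ∂μ, 0 ≤ g ω * (X (τ ω) ω - X (σ ω) ω)) ∧
    0 < μ {ω | 0 < g ω * (X (τ ω) ω - X (σ ω) ω)}

lemma OneStep.arb {X : ℝ≥0 → Ω → ℝ} (h : OneStep μ ℱ X) :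
    ∃ H : SimpleStrategy ℱ, IsArbitrage μ X H := by
  obtain ⟨σ, τ, hσ, hτ, g, hle, ⟨T, hT⟩, hg, hae, hpos⟩ := h
  refine ⟨⟨2, le_rfl, 0, fun j => if j = 2 then τ else σ,
      fun j => if j = 1 then g else fun _ => 0, ?_, ?_, ?_, ?_⟩, ?_, ?_⟩
  · intro j h1 h2
    interval_cases j
    · simpa using hσ
    · simpa using hτ
  · intro j h1 h2 ω
    interval_cases j
    simpa using hle ω
  · exact ⟨T, fun ω => by simpa using hT ω⟩
  · intro j h1 h2
    interval_cases j
    exact hg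
  · have hgain : ∀ ω, (0:ℝ) ≤ g ω * (X (τ ω) ω - X (σ ω) ω) →
        0 ≤ ∑ j ∈ Finset.Ico 1 2,
          (if j = 1 then g else fun _ => (0:ℝ)) ω *
            (X ((if j + 1 = 2 then τ else σ) ω) ω - X ((if j = 2 then τ else σ) ω) ω) := by
      intro ω hω
      simpa using hω
    filter_upwards [hae] with ω hω using hgain ω hω
  · refine lt_of_lt_of_le hpos (measure_mono fun ω hω => ?_)
    simpa [SimpleStrategy.gains] using hω

lemma naux_pos_inter {E G : Set Ω} (hE : μ E ≠ 0) (hG : μ Gᶜ = 0) : 0 < μ (E ∩ G) := by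
  have h1 := measure_le_inter_add_diff μ E G
  have h2 : μ (E \ G) = 0 := measure_mono_null (fun ω hω => hω.2) hG
  rw [h2, add_zero] at h1
  exact lt_of_lt_of_le (pos_iff_ne_zero.mpr hE) h1

/-- reduction of a simple arbitrage to a one-step arbitrage. -/
lemma exists_oneStep {X : ℝ≥0 → Ω → ℝ} (hX : SMeas ℱ X)
    (H : SimpleStrategy ℱ) (hH : IsArbitrage μ X H) : OneStep μ ℱ X := by
  classical
  have tau_mono : ∀ i j, 1 ≤ i → i ≤ j → j ≤ H.n → ∀ ω, H.τ i ω ≤ H.τ j ω := by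
    intro i j h1 hij hj ω
    induction j with
    | zero => omega
    | succ k ih =>
      rcases eq_or_lt_of_le hij with rfl | hlt
      · exact le_rfl
      · exact (ih (by omega) (by omega)).trans (H.mono k (by omega) (by omega) ω)
  set ξ : ℕ → Ω → ℝ := fun k ω => H.g k ω * (X (H.τ (k+1) ω) ω - X (H.τ k ω) ω) with hξ
  set U : ℕ → Ω → ℝ := fun m ω => ∑ k ∈ Finset.Ico 1 m, ξ k ω with hU
  have hUmeas : ∀ m (h1 : 1 ≤ m) (hm : m ≤ H.n),
      Measurable[(H.stopping m h1 hm).measurableSpace] (U m) := by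
    intro m h1 hm
    apply Finset.measurable_sum
    intro k hk
    obtain ⟨hk1, hk2⟩ := Finset.mem_Ico.mp hk
    have hst_k : MeasureTheory.IsStoppingTime ℱ (fun ω => ((H.τ k ω : ℝ≥0) : WithTop ℝ≥0)) := H.stopping k hk1 (by omega)
    have hst_k1 : MeasureTheory.IsStoppingTime ℱ (fun ω => ((H.τ (k+1) ω : ℝ≥0) : WithTop ℝ≥0)) :=
      H.stopping (k+1) (by omega) (by omega)
    have hst_m : MeasureTheory.IsStoppingTime ℱ (fun ω => ((H.τ m ω : ℝ≥0) : WithTop ℝ≥0)) := H.stopping m h1 hm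
    have hle1 : hst_k.measurableSpace ≤ hst_m.measurableSpace :=
      hst_k.measurableSpace_mono hst_m (fun ω => WithTop.coe_le_coe.mpr (tau_mono k m hk1 (by omega) hm ω))
    have hle2 : hst_k1.measurableSpace ≤ hst_m.measurableSpace :=
      hst_k1.measurableSpace_mono hst_m (fun ω => WithTop.coe_le_coe.mpr (tau_mono (k+1) m (by omega) (by omega) hm ω))
    exact ((H.g_meas k hk1 (by omega)).mono hle1 le_rfl).mul
      (((hX _ hst_k1).mono hle2 le_rfl).sub ((hX _ hst_k).mono hle1 le_rfl))
  have hUgains : ∀ ω, U H.n ω = H.gains X ω := fun ω => rfl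
  have hn2 : 2 ≤ H.n := H.two_le
  have hex : ∃ m, 1 ≤ m ∧ m + 1 ≤ H.n ∧ (∀ᵐ ω ∂μ, 0 ≤ U (m+1) ω) ∧
      0 < μ {ω | 0 < U (m+1) ω} := by
    refine ⟨H.n - 1, by omega, by omega, ?_, ?_⟩
    · have hrw : H.n - 1 + 1 = H.n := by omega
      rw [hrw]
      filter_upwards [hH.1] with ω hω
      rw [hUgains ω]; exact hω
    · have hrw : H.n - 1 + 1 = H.n := by omega
      rw [hrw]
      have : {ω | 0 < U H.n ω} = {ω | 0 < H.gains X ω} := by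
        ext ω; rw [Set.mem_setOf_eq, Set.mem_setOf_eq, hUgains ω]
      rw [this]; exact hH.2
  obtain ⟨hm1, hmn, hae, hpos⟩ := Nat.find_spec hex
  set m := Nat.find hex with hmdef
  have hst_m : MeasureTheory.IsStoppingTime ℱ (fun ω => ((H.τ m ω : ℝ≥0) : WithTop ℝ≥0)) := H.stopping m hm1 (by omega)
  have hst_m1 : MeasureTheory.IsStoppingTime ℱ (fun ω => ((H.τ (m+1) ω : ℝ≥0) : WithTop ℝ≥0)) := H.stopping (m+1) (by omega) hmn
  set A := {ω | U m ω ≤ 0} with hA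
  have hAmeas : MeasurableSet[hst_m.measurableSpace] A :=
    hUmeas m hm1 (by omega) measurableSet_Iic
  have hstep : ∀ ω, U (m+1) ω = U m ω + ξ m ω := by
    intro ω
    exact Finset.sum_Ico_succ_top hm1 _
  set g' : Ω → ℝ := A.indicator (H.g m) with hg'
  have hprod : ∀ ω, g' ω * (X (H.τ (m+1) ω) ω - X (H.τ m ω) ω) = A.indicator (ξ m) ω := by
    intro ω
    by_cases h : ω ∈ A
    · rw [hg', Set.indicator_of_mem h, Set.indicator_of_mem h]
    · rw [hg', Set.indicator_of_notMem h, Set.indicator_of_notMem h, zero_mul]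
  refine ⟨H.τ m, H.τ (m+1), hst_m, hst_m1, g', fun ω => H.mono m hm1 (by omega) ω, ?_, ?_, ?_, ?_⟩
  · obtain ⟨T, hT⟩ := H.bounded
    exact ⟨T, fun ω => (tau_mono (m+1) H.n (by omega) hmn le_rfl ω).trans (hT ω)⟩
  · exact (H.g_meas m hm1 (by omega)).indicator hAmeas
  · filter_upwards [hae] with ω hω
    rw [hprod ω]
    by_cases h : ω ∈ A
    · rw [Set.indicator_of_mem h]
      have := hstep ω
      have hU0 : U m ω ≤ 0 := h
      linarith
    · rw [Set.indicator_of_notMem h]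
  · have htgt : ∀ ω, ω ∈ A → 0 < ξ m ω →
        ω ∈ {ω | 0 < g' ω * (X (H.τ (m+1) ω) ω - X (H.τ m ω) ω)} := by
      intro ω hωA hξpos
      rw [Set.mem_setOf_eq, hprod ω, Set.indicator_of_mem hωA]
      exact hξpos
    rcases eq_or_lt_of_le hm1 with h1 | h1
    · -- m = 1 : U m = 0 everywhere
      have hU1 : ∀ ω, U m ω = 0 := by
        intro ω; rw [← h1]; simp [hU]
      refine lt_of_lt_of_le hpos (measure_mono fun ω hω => ?_)
      have hωA : ω ∈ A := by rw [hA, Set.mem_setOf_eq, hU1 ω]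
      refine htgt ω hωA ?_
      have := hstep ω
      have h2 : (0:ℝ) < U (m+1) ω := hω
      rw [hU1 ω] at this
      linarith
    · -- 1 < m : minimality at m - 1
      have hlt : m - 1 < Nat.find hex := by rw [← hmdef]; omega
      have hnotpred := Nat.find_min hex hlt
      have hrw : m - 1 + 1 = m := by omega
      rw [hrw] at hnotpred
      have hnot : ¬ ((∀ᵐ ω ∂μ, 0 ≤ U m ω) ∧ 0 < μ {ω | 0 < U m ω}) := by
        intro hcontra
        exact hnotpred ⟨by omega, by omega, hcontra.1, hcontra.2⟩
      by_cases hcase : ∀ᵐ ω ∂μ, 0 ≤ U m ω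
      · have hzero : μ {ω | 0 < U m ω} = 0 := by
          by_contra h
          exact hnot ⟨hcase, pos_iff_ne_zero.mpr h⟩
        have hAc : μ Aᶜ = 0 := by
          have : Aᶜ = {ω | 0 < U m ω} := by
            ext ω; simp [hA, not_le]
          rw [this]; exact hzero
        have hEne : μ {ω | 0 < U (m+1) ω} ≠ 0 := hpos.ne'
        refine lt_of_lt_of_le (naux_pos_inter hEne hAc) (measure_mono ?_)
        rintro ω ⟨hω1, hω2⟩
        have hωA : ω ∈ A := by simpa [hA] using hω2
        refine htgt ω hωA ?_
        have := hstep ω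
        have hU0 : U m ω ≤ 0 := hωA
        have h2 : (0:ℝ) < U (m+1) ω := hω1
        linarith
      · have hEne : μ {ω | U m ω < 0} ≠ 0 := by
          intro h
          apply hcase
          rw [MeasureTheory.ae_iff]
          convert h using 2
          ext ω
          simp [not_le]
        have hGc : μ {ω | 0 ≤ U (m+1) ω}ᶜ = 0 := by
          have := hae
          rw [MeasureTheory.ae_iff] at this
          convert this using 2
          ext ω; simp
        refine lt_of_lt_of_le (naux_pos_inter hEne hGc) (measure_mono ?_)
        rintro ω ⟨hω1, hω2⟩
        have hωlt : U m ω < 0 := hω1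
        have hωA : ω ∈ A := le_of_lt hωlt
        refine htgt ω hωA ?_
        have := hstep ω
        have h2 : (0:ℝ) ≤ U (m+1) ω := hω2
        linarith

/-- transfer of one-step arbitrage along a sign-preserving transformation. -/
lemma OneStep.congr {X Y : ℝ≥0 → Ω → ℝ}
    (hsign : ∀ (s t : ℝ≥0) ω, (0 < X t ω - X s ω ↔ 0 < Y t ω - Y s ω) ∧
      (X t ω - X s ω < 0 ↔ Y t ω - Y s ω < 0))
    (h : OneStep μ ℱ X) : OneStep μ ℱ Y := by
  obtain ⟨σ, τ, hσ, hτ, g, hle, hbd, hg, hae, hpos⟩ := h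
  refine ⟨σ, τ, hσ, hτ, g, hle, hbd, hg, ?_, ?_⟩
  · filter_upwards [hae] with ω hω
    exact ((naux_sign_mul (g ω) _ _ ((hsign (σ ω) (τ ω) ω).1)
      ((hsign (σ ω) (τ ω) ω).2)).1).mp hω
  · refine lt_of_lt_of_le hpos (measure_mono fun ω hω => ?_)
    exact ((naux_sign_mul (g ω) _ _ ((hsign (σ ω) (τ ω) ω).1)
      ((hsign (σ ω) (τ ω) ω).2)).2).mp hω

/-- a right-continuous adapted process is progressively measurable. -/
lemma progMeasurable_rc (ℱ : MeasureTheory.Filtration ℝ≥0 m0) {X : ℝ≥0 → Ω → ℝ}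
    (hadp : MeasureTheory.Adapted ℱ X)
    (hrc : ∀ ω (t : ℝ≥0), ContinuousWithinAt (fun s => X s ω) (Set.Ici t) t) :
    MeasureTheory.ProgMeasurable ℱ X := by
  classical
  intro i
  set e : ℕ → ℕ → ℝ≥0 := fun k n => min ((n : ℝ≥0) * (2⁻¹) ^ k) i with he
  set c : ℕ → ℝ≥0 → ℕ := fun k s => ⌈s * 2 ^ k⌉₊ with hc
  have hpowmul : ∀ k : ℕ, (2:ℝ≥0) ^ k * 2⁻¹ ^ k = 1 := by
    intro k
    rw [← mul_pow]
    norm_num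
  have he_le : ∀ k n, e k n ≤ i := fun k n => min_le_right _ _
  have h_ge : ∀ k (s : ℝ≥0), s ≤ i → s ≤ e k (c k s) := by
    intro k s hs
    refine le_min ?_ hs
    have h1 : s * 2 ^ k ≤ ((c k s : ℕ) : ℝ≥0) := Nat.le_ceil _
    calc s = s * (2 ^ k * 2⁻¹ ^ k) := by rw [hpowmul, mul_one]
      _ = s * 2 ^ k * 2⁻¹ ^ k := by rw [mul_assoc]
      _ ≤ ((c k s : ℕ) : ℝ≥0) * 2⁻¹ ^ k := mul_le_mul_left h1 _
  have h_lt : ∀ k (s : ℝ≥0), e k (c k s) ≤ s + 2⁻¹ ^ k := by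
    intro k s
    refine (min_le_left _ _).trans ?_
    have h1 : ((c k s : ℕ) : ℝ≥0) ≤ s * 2 ^ k + 1 := (Nat.ceil_lt_add_one (by positivity)).le
    calc ((c k s : ℕ) : ℝ≥0) * 2⁻¹ ^ k ≤ (s * 2 ^ k + 1) * 2⁻¹ ^ k := mul_le_mul_left h1 _
      _ = s * (2 ^ k * 2⁻¹ ^ k) + 2⁻¹ ^ k := by rw [add_mul, one_mul, mul_assoc]
      _ = s + 2⁻¹ ^ k := by rw [hpowmul, mul_one]
  have hVk : ∀ k : ℕ, StronglyMeasurable[Subtype.instMeasurableSpace.prod (ℱ i)]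
      fun p : Set.Iic i × Ω => X (e k (c k p.1)) p.2 := by
    intro k
    apply Measurable.stronglyMeasurable
    have hcm : Measurable[Subtype.instMeasurableSpace.prod (ℱ i)]
        fun p : Set.Iic i × Ω => c k (p.1 : ℝ≥0) :=
      Nat.measurable_ceil.comp ((measurable_subtype_coe.comp measurable_fst).mul_const _)
    have hbound : ∀ p : Set.Iic i × Ω, c k (p.1 : ℝ≥0) ≤ c k i := by
      intro p
      exact Nat.ceil_mono (mul_le_mul_left p.1.2 _)
    have hrep : (fun p : Set.Iic i × Ω => X (e k (c k p.1)) p.2) =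
        fun p => ∑ n ∈ Finset.range (c k (i : ℝ≥0) + 1),
          if c k (p.1 : ℝ≥0) = n then X (e k n) p.2 else 0 := by
      funext p
      rw [Finset.sum_ite_eq, if_pos (Finset.mem_range.mpr (by
        have := hbound p; omega))]
    rw [hrep]
    apply Finset.measurable_sum
    intro n _
    refine Measurable.ite (hcm (measurableSet_singleton n)) ?_ measurable_const
    exact ((hadp (e k n)).mono (ℱ.mono (he_le k n)) le_rfl).comp measurable_snd
  have htend : Filter.Tendsto (fun (k : ℕ) (p : Set.Iic i × Ω) => X (e k (c k p.1)) p.2)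
      Filter.atTop (nhds fun p : Set.Iic i × Ω => X p.1 p.2) := by
    rw [tendsto_pi_nhds]
    intro p
    have hpt : Filter.Tendsto (fun k => e k (c k (p.1 : ℝ≥0))) Filter.atTop
        (nhdsWithin (p.1 : ℝ≥0) (Set.Ici (p.1 : ℝ≥0))) := by
      rw [tendsto_nhdsWithin_iff]
      constructor
      · have hup : Filter.Tendsto (fun k : ℕ => (p.1 : ℝ≥0) + 2⁻¹ ^ k) Filter.atTop
            (nhds ((p.1 : ℝ≥0) + 0)) :=
          tendsto_const_nhds.add (NNReal.tendsto_pow_atTop_nhds_zero_of_lt_one two_inv_lt_one)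
        rw [add_zero] at hup
        exact tendsto_of_tendsto_of_tendsto_of_le_of_le tendsto_const_nhds hup
          (fun k => h_ge k _ p.1.2) (fun k => h_lt k _)
      · exact Filter.Eventually.of_forall fun k => h_ge k _ p.1.2
    exact (hrc p.2 p.1).tendsto.comp hpt
  exact stronglyMeasurable_of_tendsto Filter.atTop hVk htend

lemma smeas_of_rc {X : ℝ≥0 → Ω → ℝ} (hadp : MeasureTheory.Adapted ℱ X)
    (hrc : ∀ ω (t : ℝ≥0), ContinuousWithinAt (fun s => X s ω) (Set.Ici t) t) :
    SMeas ℱ X := fun τ hτ =>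
  MeasureTheory.measurable_stoppedValue (progMeasurable_rc ℱ hadp hrc) hτ

/-- stopped measurability is preserved by strictly monotone transformations. -/
lemma smeas_comp {X : ℝ≥0 → Ω → ℝ} {D : Set ℝ} {f : ℝ → ℝ} (hf : StrictMonoOn f D)
    (hD : ∀ t ω, X t ω ∈ D) (hX : SMeas ℱ X) : SMeas ℱ (fun t ω => f (X t ω)) := by
  intro τ hτ
  apply measurable_of_Ioi
  intro a
  have hW : MeasurableSet {y : ℝ | ∃ x ∈ D, x ≤ y ∧ a < f x} := by
    refine Set.OrdConnected.measurableSet (IsUpperSet.ordConnected ?_)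
    rintro y y' hyy' ⟨x, hx, hxy, hfx⟩
    exact ⟨x, hx, hxy.trans hyy', hfx⟩
  have hpre : (fun ω => f (X (τ ω) ω)) ⁻¹' (Set.Ioi a) =
      (fun ω => X (τ ω) ω) ⁻¹' {y : ℝ | ∃ x ∈ D, x ≤ y ∧ a < f x} := by
    ext ω
    simp only [Set.mem_preimage, Set.mem_Ioi, Set.mem_setOf_eq]
    constructor
    · intro h
      exact ⟨X (τ ω) ω, hD _ ω, le_rfl, h⟩
    · rintro ⟨x, hx, hxy, hfx⟩
      rcases eq_or_lt_of_le hxy with rfl | hlt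
      · exact hfx
      · exact hfx.trans (hf hx (hD _ ω) hlt)
  rw [hpre]
  exact hX τ hτ hW

/-- negation of the integrand gives arbitrage for the negated process. -/
lemma arb_neg {X : ℝ≥0 → Ω → ℝ} (h : ∃ H : SimpleStrategy ℱ, IsArbitrage μ X H) :
    ∃ H : SimpleStrategy ℱ, IsArbitrage μ (fun t ω => -(X t ω)) H := by
  obtain ⟨H, hH⟩ := h
  refine ⟨⟨H.n, H.two_le, H.g0, H.τ, fun j ω => -(H.g j ω), H.stopping, H.mono, H.bounded,
    fun j h1 h2 => (H.g_meas j h1 h2).neg⟩, ?_, ?_⟩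
  · filter_upwards [hH.1] with ω hω
    have : SimpleStrategy.gains
        (⟨H.n, H.two_le, H.g0, H.τ, fun j ω => -(H.g j ω), H.stopping, H.mono, H.bounded,
          fun j h1 h2 => (H.g_meas j h1 h2).neg⟩ : SimpleStrategy ℱ)
        (fun t ω => -(X t ω)) ω = H.gains X ω := by
      unfold SimpleStrategy.gains
      exact Finset.sum_congr rfl fun j _ => by ring
    rw [this]
    exact hω
  · have hset : {ω | 0 < SimpleStrategy.gains
        (⟨H.n, H.two_le, H.g0, H.τ, fun j ω => -(H.g j ω), H.stopping, H.mono, H.bounded,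
          fun j h1 h2 => (H.g_meas j h1 h2).neg⟩ : SimpleStrategy ℱ)
        (fun t ω => -(X t ω)) ω} = {ω | 0 < H.gains X ω} := by
      ext ω
      simp only [Set.mem_setOf_eq]
      have : SimpleStrategy.gains
          (⟨H.n, H.two_le, H.g0, H.τ, fun j ω => -(H.g j ω), H.stopping, H.mono, H.bounded,
            fun j h1 h2 => (H.g_meas j h1 h2).neg⟩ : SimpleStrategy ℱ)
          (fun t ω => -(X t ω)) ω = H.gains X ω := by
        unfold SimpleStrategy.gains
        exact Finset.sum_congr rfl fun j _ => by ring
      rw [this]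
    rw [hset]
    exact hH.2

lemma noArb_neg {X : ℝ≥0 → Ω → ℝ} :
    NoArbitrageSimple μ ℱ X ↔ NoArbitrageSimple μ ℱ (fun t ω => -(X t ω)) := by
  unfold NoArbitrageSimple
  constructor
  · intro h hc
    apply h
    have := arb_neg (ℱ := ℱ) (μ := μ) hc
    simpa using this
  · intro h hc
    exact h (arb_neg hc)

end Aux

/-- **Corollary 5.** For a càdlàg adapted process `S` and a strictly monotone function
`f` defined on a set containing the range of `S`, no arbitrage of `S` in `S(𝔽)` is
equivalent to no arbitrage of `f ∘ S` in `S(𝔽)`, under any measure `Q` equivalent to `P`. -/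
theorem stmt10 (P : MeasureTheory.Measure Ω) [MeasureTheory.IsProbabilityMeasure P]
    (ℱ : MeasureTheory.Filtration ℝ≥0 m0)
    (S : ℝ≥0 → Ω → ℝ) (hadapted : MeasureTheory.Adapted ℱ S) (hcadlag : IsCadlag S)
    (D : Set ℝ) (f : ℝ → ℝ) (hf : StrictMonoOn f D ∨ StrictAntiOn f D)
    (hrange : ∀ t ω, S t ω ∈ D)
    (Q : MeasureTheory.Measure Ω) [MeasureTheory.IsProbabilityMeasure Q]
    (hQP : Q ≪ P) (hPQ : P ≪ Q) :
    NoArbitrageSimple Q ℱ S ↔ NoArbitrageSimple Q ℱ (fun t ω => f (S t ω)) := by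
  have hrc : ∀ ω (t : ℝ≥0), ContinuousWithinAt (fun s => S s ω) (Set.Ici t) t :=
    fun ω t => (hcadlag ω).1 t
  have hSM : SMeas ℱ S := smeas_of_rc hadapted hrc
  have main : ∀ g : ℝ → ℝ, StrictMonoOn g D →
      (NoArbitrageSimple Q ℱ S ↔ NoArbitrageSimple Q ℱ (fun t ω => g (S t ω))) := by
    intro g hg
    have hSMg : SMeas ℱ (fun t ω => g (S t ω)) := smeas_comp hg hrange hSM
    have hsign : ∀ (s t : ℝ≥0) ω, (0 < S t ω - S s ω ↔ 0 < g (S t ω) - g (S s ω)) ∧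
        (S t ω - S s ω < 0 ↔ g (S t ω) - g (S s ω) < 0) := by
      intro s t ω
      constructor
      · rw [sub_pos, sub_pos]
        exact (hg.lt_iff_lt (hrange s ω) (hrange t ω)).symm
      · rw [sub_neg, sub_neg]
        exact (hg.lt_iff_lt (hrange t ω) (hrange s ω)).symm
    have hsign' : ∀ (s t : ℝ≥0) ω,
        (0 < g (S t ω) - g (S s ω) ↔ 0 < S t ω - S s ω) ∧
        (g (S t ω) - g (S s ω) < 0 ↔ S t ω - S s ω < 0) :=
      fun s t ω => ⟨(hsign s t ω).1.symm, (hsign s t ω).2.symm⟩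
    unfold NoArbitrageSimple
    constructor
    · intro h hc
      obtain ⟨H', hH'⟩ := hc
      exact h (OneStep.arb (OneStep.congr hsign' (exists_oneStep hSMg H' hH')))
    · intro h hc
      obtain ⟨H', hH'⟩ := hc
      exact h (OneStep.arb (OneStep.congr hsign (exists_oneStep hSM H' hH')))
  rcases hf with hmono | hanti
  · exact main f hmono
  · have hneg : StrictMonoOn (fun x => -f x) D :=
      fun x hx y hy hxy => neg_lt_neg (hanti hx hy hxy)
    exact (main _ hneg).trans (noArb_neg (μ := Q) (ℱ := ℱ) (X := fun t ω => f (S t ω))).symm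
end
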